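/- arXiv:2308.01075 — 7 statements merged into one kernel-verified Lean document; each statement's English description precedes it below -/
import Mathlib

section
/- Let G be an automorphism group of a 2-(v,k,λ) design with replication number r, with point orbits of sizes ω_1,…,ω_m, block orbits of sizes Ω_1,…,Ω_n, and orbit matrix entries γ_{ij}. Then for all 1 ≤ s,t ≤ m: Σ_{j=1}^n (ω_t/Ω_j)·γ_{sj}·γ_{tj} = λ·ω_t + δ_{st}·(r − λ). -/
open Finset

/-- For an automorphism group of a 2-(v,k,λ) design with replication number `r`,
orbit matrix entries `γ_{ij}` satisfy, for all `s, t`: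
`∑_j (ω_t/Ω_j)·γ_{sj}·γ_{tj} = λ·ω_t + δ_{st}·(r − λ)`. -/
theorem stmt11 (v b m n k lam r : ℕ)
    (B : Fin b → Finset (Fin v))
    (hk : ∀ a, (B a).card = k)
    (hlam : ∀ p p' : Fin v, p ≠ p' →
      (Finset.univ.filter (fun a => p ∈ B a ∧ p' ∈ B a)).card = lam)
    (hr : ∀ p : Fin v, (Finset.univ.filter (fun a => p ∈ B a)).card = r)
    (G : Subgroup (Equiv.Perm (Fin v)))
    (σ : G →* Equiv.Perm (Fin b))
    (hσ : ∀ (g : G) (a : Fin b), B (σ g a) = (B a).image (g : Equiv.Perm (Fin v)))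
    (PO : Fin m → Finset (Fin v))
    (hPOorb : ∀ i, ∃ p, ∀ q, q ∈ PO i ↔ ∃ g : G, (g : Equiv.Perm (Fin v)) p = q)
    (hPOcov : ∀ p, ∃ i, p ∈ PO i)
    (hPOdisj : ∀ i i', i ≠ i' → Disjoint (PO i) (PO i'))
    (BO : Fin n → Finset (Fin b))
    (hBOorb : ∀ j, ∃ a, ∀ c, c ∈ BO j ↔ ∃ g : G, σ g a = c)
    (hBOcov : ∀ a, ∃ j, a ∈ BO j)
    (hBOdisj : ∀ j j', j ≠ j' → Disjoint (BO j) (BO j'))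
    (rep : Fin m → Fin v) (hrep : ∀ i, rep i ∈ PO i) :
    ∀ s t : Fin m,
      ∑ j, ((PO t).card : ℚ) / ((BO j).card : ℚ) *
          (((BO j).filter (fun a => rep s ∈ B a)).card : ℚ) *
          (((BO j).filter (fun a => rep t ∈ B a)).card : ℚ) =
        (lam : ℚ) * ((PO t).card : ℚ) +
          (if s = t then ((r : ℚ) - (lam : ℚ)) else 0) := by
  intro s t
  classical
  -- orbit invariance of point orbits
  have hPOinv : ∀ (i : Fin m) (g : G) (p : Fin v), p ∈ PO i →
      (g : Equiv.Perm (Fin v)) p ∈ PO i := by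
    intro i g p hp
    obtain ⟨p₀, h⟩ := hPOorb i
    obtain ⟨g', hg'⟩ := (h p).1 hp
    exact (h _).2 ⟨g * g', by simp [hg']⟩
  -- transitivity on point orbits
  have hPOtrans : ∀ (i : Fin m) (p q : Fin v), p ∈ PO i → q ∈ PO i →
      ∃ g : G, (g : Equiv.Perm (Fin v)) p = q := by
    intro i p q hp hq
    obtain ⟨p₀, h⟩ := hPOorb i
    obtain ⟨g₁, hg₁⟩ := (h p).1 hp
    obtain ⟨g₂, hg₂⟩ := (h q).1 hq
    refine ⟨g₂ * g₁⁻¹, ?_⟩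
    have h1 : ((g₁ : Equiv.Perm (Fin v)))⁻¹ p = p₀ := by
      rw [← hg₁]; simp
    rw [Equiv.Perm.inv_def] at h1
    simp [h1, hg₂]
  -- invariance of block orbits
  have hBOinv : ∀ (j : Fin n) (g : G) (c : Fin b), c ∈ BO j → σ g c ∈ BO j := by
    intro j g c hc
    obtain ⟨a₀, h⟩ := hBOorb j
    obtain ⟨g', hg'⟩ := (h c).1 hc
    exact (h _).2 ⟨g * g', by simp [map_mul, hg']⟩
  -- transitivity on block orbits
  have hBOtrans : ∀ (j : Fin n) (a c : Fin b), a ∈ BO j → c ∈ BO j →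
      ∃ g : G, σ g a = c := by
    intro j a c ha hc
    obtain ⟨a₀, h⟩ := hBOorb j
    obtain ⟨g₁, hg₁⟩ := (h a).1 ha
    obtain ⟨g₂, hg₂⟩ := (h c).1 hc
    refine ⟨g₂ * g₁⁻¹, ?_⟩
    have h1 : (σ g₁)⁻¹ a = a₀ := by
      rw [← hg₁]; simp
    rw [Equiv.Perm.inv_def] at h1
    simp [map_mul, h1, hg₂]
  -- block orbits are nonempty
  have hBOne : ∀ j : Fin n, ∃ a, a ∈ BO j := by
    intro j
    obtain ⟨a₀, h⟩ := hBOorb j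
    exact ⟨a₀, (h a₀).2 ⟨1, by simp⟩⟩
  -- γ is constant on point orbits
  have hgamma : ∀ (j : Fin n) (p q : Fin v) (g : G), (g : Equiv.Perm (Fin v)) p = q →
      ((BO j).filter (fun a => q ∈ B a)).card = ((BO j).filter (fun a => p ∈ B a)).card := by
    intro j p q g hg
    refine (Finset.card_bij' (fun a _ => σ g a) (fun c _ => σ g⁻¹ c) ?_ ?_ ?_ ?_).symm
    · intro a ha
      rw [mem_filter] at ha ⊢
      refine ⟨hBOinv j g a ha.1, ?_⟩
      rw [hσ]
      exact Finset.mem_image.2 ⟨p, ha.2, hg⟩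
    · intro c hc
      rw [mem_filter] at hc ⊢
      refine ⟨hBOinv j g⁻¹ c hc.1, ?_⟩
      rw [hσ]
      refine Finset.mem_image.2 ⟨q, hc.2, ?_⟩
      simp [← hg]
    · intro a _
      show σ g⁻¹ (σ g a) = a
      rw [← Equiv.Perm.mul_apply, ← map_mul]; simp
    · intro c _
      show σ g (σ g⁻¹ c) = c
      rw [← Equiv.Perm.mul_apply, ← map_mul]; simp
  -- intersection with point orbit is constant on block orbits
  have hinter : ∀ (j : Fin n) (a c : Fin b), a ∈ BO j → c ∈ BO j →
      ((PO t).filter (fun q => q ∈ B a)).card = ((PO t).filter (fun q => q ∈ B c)).card := by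
    intro j a c ha hc
    obtain ⟨g, hg⟩ := hBOtrans j a c ha hc
    refine Finset.card_bij' (fun p _ => (g : Equiv.Perm (Fin v)) p)
      (fun q _ => ((g⁻¹ : G) : Equiv.Perm (Fin v)) q) ?_ ?_ ?_ ?_
    · intro p hp
      rw [mem_filter] at hp ⊢
      refine ⟨hPOinv t g p hp.1, ?_⟩
      rw [← hg, hσ]
      exact Finset.mem_image.2 ⟨p, hp.2, rfl⟩
    · intro q hq
      rw [mem_filter] at hq ⊢
      refine ⟨hPOinv t g⁻¹ q hq.1, ?_⟩
      rw [← hg, hσ] at hq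
      obtain ⟨p, hp, hpq⟩ := Finset.mem_image.1 hq.2
      have h1 : ((g⁻¹ : G) : Equiv.Perm (Fin v)) q = p := by simp [← hpq]
      show ((g⁻¹ : G) : Equiv.Perm (Fin v)) q ∈ B a
      rw [h1]; exact hp
    · intro p _; simp
    · intro q _; simp
  set γs : Fin n → ℕ := fun j => ((BO j).filter (fun a => rep s ∈ B a)).card with hγs
  set γt : Fin n → ℕ := fun j => ((BO j).filter (fun a => rep t ∈ B a)).card with hγt
  set c : Fin b → ℕ := fun a => ((PO t).filter (fun q => q ∈ B a)).card with hc
  -- ω_t * γ_t j = ∑_{a ∈ BO j} c a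
  have hA : ∀ j : Fin n, (PO t).card * γt j = ∑ a ∈ BO j, c a := by
    intro j
    have h1 : ∀ q ∈ PO t, ((BO j).filter (fun a => q ∈ B a)).card = γt j := by
      intro q hq
      obtain ⟨g, hg⟩ := hPOtrans t (rep t) q (hrep t) hq
      exact hgamma j (rep t) q g hg
    calc (PO t).card * γt j = ∑ q ∈ PO t, ((BO j).filter (fun a => q ∈ B a)).card := by
          rw [Finset.sum_congr rfl h1, Finset.sum_const, smul_eq_mul]
      _ = ∑ q ∈ PO t, ∑ a ∈ BO j, if q ∈ B a then 1 else 0 := by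
          refine Finset.sum_congr rfl fun q _ => ?_
          rw [Finset.card_filter]
      _ = ∑ a ∈ BO j, ∑ q ∈ PO t, if q ∈ B a then 1 else 0 := Finset.sum_comm
      _ = ∑ a ∈ BO j, c a := by
          refine Finset.sum_congr rfl fun a _ => ?_
          simp [hc, Finset.card_filter]
  -- the key per-orbit counting identity
  have hN : ∀ j : Fin n, (PO t).card * γt j * γs j =
      (BO j).card * ∑ a ∈ (BO j).filter (fun a => rep s ∈ B a), c a := by
    intro j
    obtain ⟨a₀, ha₀⟩ := hBOne j
    have h2 : ∑ a ∈ BO j, c a = (BO j).card * c a₀ := by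
      rw [Finset.sum_congr rfl fun a ha => hinter j a a₀ ha ha₀, Finset.sum_const, smul_eq_mul]
    have h3 : ∑ a ∈ (BO j).filter (fun a => rep s ∈ B a), c a = γs j * c a₀ := by
      rw [Finset.sum_congr rfl fun a ha => hinter j a a₀ (Finset.mem_filter.1 ha).1 ha₀,
        Finset.sum_const, smul_eq_mul]
    rw [hA j, h2, h3]; ring
  -- convert each ℚ term
  have hterm : ∀ j : Fin n,
      ((PO t).card : ℚ) / ((BO j).card : ℚ) * (γs j : ℚ) * (γt j : ℚ) =
      ((∑ a ∈ (BO j).filter (fun a => rep s ∈ B a), c a : ℕ) : ℚ) := by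
    intro j
    obtain ⟨a₀, ha₀⟩ := hBOne j
    have hpos : (0 : ℚ) < ((BO j).card : ℚ) := by
      exact_mod_cast Finset.card_pos.2 ⟨a₀, ha₀⟩
    have := hN j
    have hcast : ((PO t).card : ℚ) * (γt j : ℚ) * (γs j : ℚ) =
        ((BO j).card : ℚ) * ((∑ a ∈ (BO j).filter (fun a => rep s ∈ B a), c a : ℕ) : ℚ) := by
      exact_mod_cast congrArg (Nat.cast : ℕ → ℚ) this
    rw [div_mul_eq_mul_div, div_mul_eq_mul_div, div_eq_iff (ne_of_gt hpos)]
    push_cast at hcast ⊢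
    linear_combination hcast
  rw [Finset.sum_congr rfl fun j _ => hterm j]
  rw [← Nat.cast_sum]
  -- sum the counts over all block orbits
  have horb : ∀ a : Fin b, ∀ j, a ∈ BO j ↔ (Classical.choose (hBOcov a)) = j := by
    intro a j
    constructor
    · intro ha
      by_contra hne
      exact Finset.disjoint_left.1 (hBOdisj _ _ hne)
        (Classical.choose_spec (hBOcov a)) ha
    · rintro rfl
      exact Classical.choose_spec (hBOcov a)
  have hpart : ∑ j, ∑ a ∈ (BO j).filter (fun a => rep s ∈ B a), c a =
      ∑ a ∈ Finset.univ.filter (fun a => rep s ∈ B a), c a := by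
    have hmap : ∀ a ∈ Finset.univ.filter (fun a => rep s ∈ B a),
        (Classical.choose (hBOcov a)) ∈ (Finset.univ : Finset (Fin n)) := fun _ _ =>
      Finset.mem_univ _
    rw [← Finset.sum_fiberwise_of_maps_to hmap c]
    refine Finset.sum_congr rfl fun j _ => Finset.sum_congr ?_ fun _ _ => rfl
    ext a
    simp only [Finset.mem_filter, Finset.mem_univ, true_and]
    rw [horb a j]
    tauto
  rw [hpart]
  -- swap to a sum over points of the orbit
  have hswap : ∑ a ∈ Finset.univ.filter (fun a => rep s ∈ B a), c a =
      ∑ q ∈ PO t, (Finset.univ.filter (fun a => rep s ∈ B a ∧ q ∈ B a)).card := by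
    calc ∑ a ∈ Finset.univ.filter (fun a => rep s ∈ B a), c a
        = ∑ a ∈ Finset.univ.filter (fun a => rep s ∈ B a), ∑ q ∈ PO t,
            if q ∈ B a then 1 else 0 := by
          refine Finset.sum_congr rfl fun a _ => ?_
          simp [hc, Finset.card_filter]
      _ = ∑ q ∈ PO t, ∑ a ∈ Finset.univ.filter (fun a => rep s ∈ B a),
            if q ∈ B a then 1 else 0 := Finset.sum_comm
      _ = ∑ q ∈ PO t, (Finset.univ.filter (fun a => rep s ∈ B a ∧ q ∈ B a)).card := by
          refine Finset.sum_congr rfl fun q _ => ?_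
          rw [Finset.card_filter, Finset.sum_filter]
          refine Finset.sum_congr rfl fun a _ => ?_
          by_cases h1 : rep s ∈ B a <;> by_cases h2 : q ∈ B a <;> simp [h1, h2]
  rw [hswap]
  by_cases hst : s = t
  · subst hst
    simp only [if_pos rfl]
    have hω : 1 ≤ (PO s).card := Finset.card_pos.2 ⟨rep s, hrep s⟩
    rw [← Finset.add_sum_erase _ _ (hrep s)]
    have hfix : (Finset.univ.filter (fun a => rep s ∈ B a ∧ rep s ∈ B a)).card = r := by
      rw [← hr (rep s)]; congr 1; ext a; simp
    have hrest : ∑ q ∈ (PO s).erase (rep s),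
        (Finset.univ.filter (fun a => rep s ∈ B a ∧ q ∈ B a)).card = lam * ((PO s).card - 1) := by
      rw [Finset.sum_congr rfl fun q hq =>
        hlam (rep s) q (fun h => (Finset.mem_erase.1 hq).1 h.symm)]
      rw [Finset.sum_const, smul_eq_mul, Finset.card_erase_of_mem (hrep s), mul_comm]
    rw [hfix, hrest]
    have : (((PO s).card - 1 : ℕ) : ℚ) = ((PO s).card : ℚ) - 1 := by
      rw [Nat.cast_sub hω]; norm_num
    push_cast [this]
    ring
  · simp only [if_neg hst, add_zero]
    have hne : ∀ q ∈ PO t, rep s ≠ q := by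
      intro q hq h
      exact Finset.disjoint_left.1 (hPOdisj s t hst) (hrep s) (h ▸ hq)
    rw [Finset.sum_congr rfl fun q hq => hlam (rep s) q (hne q hq)]
    rw [Finset.sum_const, smul_eq_mul]
    push_cast
    ring
end

section
/- Let D be a quasi-symmetric 2-design with block intersection numbers x < y, G an automorphism group with point orbits of sizes ω_i and block orbits of sizes Ω_j, γ_{ij} the point orbit matrix entries, and r_{jj'} the number of blocks in block orbit B_{j'} meeting a fixed representative block of B_j in y points (for j = j', not counting the block itself when counting self-intersection). Then (1/Ω_j)·Σ_{i=1}^m ω_i·γ_{ij}·γ_{ij'} = r_{jj'}(y−x) + Ω_{j'}·x + (k−x)·δ_{jj'}. -/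
open Finset

/-- Orbit matrix identity (equation (5)) for a quasi-symmetric design with block
intersection numbers `x < y`:
`(1/Ω_j) Σ_i ω_i γ_{ij} γ_{ij'} = r_{jj'}(y−x) + Ω_{j'} x + (k−x) δ_{jj'}`,
where `r_{jj'}` is the number of blocks of block orbit `j'` (other than the chosen
representative block of orbit `j`) meeting that representative in `y` points. -/
theorem stmt12 (v b m n k lam x y : ℕ) (hxy : x < y)
    (B : Fin b → Finset (Fin v))
    (hk : ∀ a, (B a).card = k)
    (hlam : ∀ p p' : Fin v, p ≠ p' →
      (Finset.univ.filter (fun a => p ∈ B a ∧ p' ∈ B a)).card = lam)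
    (hqs : ∀ a a', a ≠ a' → (B a ∩ B a').card = x ∨ (B a ∩ B a').card = y)
    (G : Subgroup (Equiv.Perm (Fin v)))
    (σ : G →* Equiv.Perm (Fin b))
    (hσ : ∀ (g : G) (a : Fin b), B (σ g a) = (B a).image (g : Equiv.Perm (Fin v)))
    (PO : Fin m → Finset (Fin v))
    (hPOorb : ∀ i, ∃ p, ∀ q, q ∈ PO i ↔ ∃ g : G, (g : Equiv.Perm (Fin v)) p = q)
    (hPOcov : ∀ p, ∃ i, p ∈ PO i)
    (hPOdisj : ∀ i i', i ≠ i' → Disjoint (PO i) (PO i'))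
    (BO : Fin n → Finset (Fin b))
    (hBOorb : ∀ j, ∃ a, ∀ c, c ∈ BO j ↔ ∃ g : G, σ g a = c)
    (hBOcov : ∀ a, ∃ j, a ∈ BO j)
    (hBOdisj : ∀ j j', j ≠ j' → Disjoint (BO j) (BO j'))
    (rep : Fin m → Fin v) (hrep : ∀ i, rep i ∈ PO i)
    (repB : Fin n → Fin b) (hrepB : ∀ j, repB j ∈ BO j) :
    ∀ j j' : Fin n,
      (1 / ((BO j).card : ℚ)) *
          ∑ i, ((PO i).card : ℚ) *
            (((BO j).filter (fun a => rep i ∈ B a)).card : ℚ) *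
            (((BO j').filter (fun a => rep i ∈ B a)).card : ℚ) =
        (((BO j').filter (fun a => a ≠ repB j ∧ (B a ∩ B (repB j)).card = y)).card : ℚ) *
            ((y : ℚ) - (x : ℚ)) +
          ((BO j').card : ℚ) * (x : ℚ) +
          (if j = j' then ((k : ℚ) - (x : ℚ)) else 0) := by
  classical
  intro j j'
  -- block orbits are closed under the action
  have hclosed : ∀ (g : G) (jj : Fin n) (c : Fin b), c ∈ BO jj → σ g c ∈ BO jj := by
    intro g jj c hc
    obtain ⟨a0, ha0⟩ := hBOorb jj
    rw [ha0] at hc ⊢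
    obtain ⟨h, rfl⟩ := hc
    exact ⟨g * h, by rw [map_mul, Equiv.Perm.mul_apply]⟩
  have hsiginv : ∀ (g : G) (c : Fin b), σ g ((σ g⁻¹) c) = c := by
    intro g c
    rw [← Equiv.Perm.mul_apply, ← map_mul, mul_inv_cancel, map_one, Equiv.Perm.one_apply]
  have hPOrep : ∀ (i : Fin m) (p : Fin v), p ∈ PO i →
      ∃ g : G, (g : Equiv.Perm (Fin v)) (rep i) = p := by
    intro i p hp
    obtain ⟨p0, hp0⟩ := hPOorb i
    obtain ⟨g, rfl⟩ := (hp0 p).1 hp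
    obtain ⟨h, hh⟩ := (hp0 (rep i)).1 (hrep i)
    refine ⟨g * h⁻¹, ?_⟩
    rw [← hh]
    simp
  have hBOrep : ∀ (jj : Fin n) (a : Fin b), a ∈ BO jj → ∃ g : G, σ g (repB jj) = a := by
    intro jj a ha
    obtain ⟨a0, ha0⟩ := hBOorb jj
    obtain ⟨g, rfl⟩ := (ha0 a).1 ha
    obtain ⟨h, hh⟩ := (ha0 (repB jj)).1 (hrepB jj)
    refine ⟨g * h⁻¹, ?_⟩
    rw [← hh, map_mul, map_inv, Equiv.Perm.mul_apply, Equiv.Perm.inv_def, Equiv.symm_apply_apply]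
  have hmemB : ∀ (g : G) (a : Fin b) (p : Fin v),
      p ∈ B a ↔ (g : Equiv.Perm (Fin v)) p ∈ B (σ g a) := by
    intro g a p
    simp [hσ]
  have hcardinter : ∀ (g : G) (a c : Fin b),
      (B (σ g a) ∩ B (σ g c)).card = (B a ∩ B c).card := by
    intro g a c
    rw [hσ, hσ, ← Finset.image_inter _ _ (Equiv.injective _),
      Finset.card_image_of_injective _ (Equiv.injective _)]
  -- γ is constant on point orbits
  have hPconst : ∀ (g : G) (jj : Fin n) (p : Fin v),
      ((BO jj).filter (fun a => ((g : Equiv.Perm (Fin v)) p) ∈ B a)).card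
        = ((BO jj).filter (fun a => p ∈ B a)).card := by
    intro g jj p
    have himg : (BO jj).filter (fun a => ((g : Equiv.Perm (Fin v)) p) ∈ B a) =
        ((BO jj).filter (fun a => p ∈ B a)).image (σ g) := by
      ext c
      simp only [Finset.mem_filter, Finset.mem_image]
      constructor
      · rintro ⟨hc, hpc⟩
        refine ⟨(σ g⁻¹) c, ⟨hclosed g⁻¹ jj c hc, ?_⟩, hsiginv g c⟩
        rw [hmemB g ((σ g⁻¹) c) p, hsiginv]
        exact hpc
      · rintro ⟨d, ⟨hd, hpd⟩, rfl⟩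
        exact ⟨hclosed g jj d hd, (hmemB g d p).1 hpd⟩
    rw [himg, Finset.card_image_of_injective _ (σ g).injective]
  -- point orbits partition the points
  have huniv : (Finset.univ : Finset (Fin v)) = Finset.univ.biUnion PO := by
    ext p
    simp only [Finset.mem_biUnion, Finset.mem_univ, true_iff]
    obtain ⟨i, hi⟩ := hPOcov p
    exact ⟨i, trivial, hi⟩
  have hsplit : ∀ f : Fin v → ℕ, ∑ p : Fin v, f p = ∑ i : Fin m, ∑ p ∈ PO i, f p := by
    intro f
    rw [huniv, Finset.sum_biUnion]
    intro i _ i' _ hne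
    exact hPOdisj i i' hne
  -- double counting
  have hdouble : ∑ p : Fin v, ((BO j).filter (fun a => p ∈ B a)).card *
        ((BO j').filter (fun a => p ∈ B a)).card =
      ∑ a ∈ BO j, ∑ c ∈ BO j', (B a ∩ B c).card := by
    have hPcard : ∀ (p : Fin v) (jj : Fin n), ((BO jj).filter (fun a => p ∈ B a)).card =
        ∑ a ∈ BO jj, if p ∈ B a then 1 else 0 := by
      intro p jj
      rw [Finset.card_filter]
    calc ∑ p : Fin v, ((BO j).filter (fun a => p ∈ B a)).card *
          ((BO j').filter (fun a => p ∈ B a)).card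
        = ∑ p : Fin v, ∑ a ∈ BO j, ∑ c ∈ BO j',
            (if p ∈ B a then 1 else 0) * (if p ∈ B c then 1 else 0) := by
          refine Finset.sum_congr rfl fun p _ => ?_
          rw [hPcard, hPcard, Finset.sum_mul_sum]
      _ = ∑ a ∈ BO j, ∑ c ∈ BO j', ∑ p : Fin v,
            (if p ∈ B a then 1 else 0) * (if p ∈ B c then 1 else 0) := by
          rw [Finset.sum_comm]
          exact Finset.sum_congr rfl fun a _ => Finset.sum_comm
      _ = ∑ a ∈ BO j, ∑ c ∈ BO j', (B a ∩ B c).card := by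
          refine Finset.sum_congr rfl fun a _ => Finset.sum_congr rfl fun c _ => ?_
          have h1 : (B a ∩ B c) = Finset.univ.filter (fun p => p ∈ B a ∧ p ∈ B c) := by
            ext p; simp [Finset.mem_inter]
          rw [h1, Finset.card_filter]
          refine Finset.sum_congr rfl fun p _ => ?_
          by_cases h1 : p ∈ B a <;> by_cases h2 : p ∈ B c <;> simp [h1, h2]
  -- main natural-number identity
  have hsum1 : ∑ i : Fin m, (PO i).card * (((BO j).filter (fun a => rep i ∈ B a)).card *
        ((BO j').filter (fun a => rep i ∈ B a)).card) =
      ∑ a ∈ BO j, ∑ c ∈ BO j', (B a ∩ B c).card := by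
    rw [← hdouble, hsplit (fun p => ((BO j).filter (fun a => p ∈ B a)).card *
        ((BO j').filter (fun a => p ∈ B a)).card)]
    refine Finset.sum_congr rfl fun i _ => ?_
    have hconst : ∀ p ∈ PO i, ((BO j).filter (fun a => p ∈ B a)).card *
        ((BO j').filter (fun a => p ∈ B a)).card =
        ((BO j).filter (fun a => rep i ∈ B a)).card *
        ((BO j').filter (fun a => rep i ∈ B a)).card := by
      intro p hp
      obtain ⟨g, hg⟩ := hPOrep i p hp
      rw [← hg, hPconst, hPconst]
    rw [Finset.sum_congr rfl hconst, Finset.sum_const, smul_eq_mul]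
  -- orbit membership and Kronecker delta
  have hdeltamem : ∀ a ∈ BO j, (a ∈ BO j' ↔ j = j') := by
    intro a ha
    constructor
    · intro ha'
      by_contra hne
      exact Finset.disjoint_left.mp (hBOdisj j j' hne) ha ha'
    · rintro rfl; exact ha
  -- r is constant over the block orbit
  have hrconst : ∀ a ∈ BO j,
      ((BO j').filter (fun c => c ≠ a ∧ (B a ∩ B c).card = y)).card =
      ((BO j').filter (fun c => c ≠ repB j ∧ (B c ∩ B (repB j)).card = y)).card := by
    intro a ha
    obtain ⟨g, hg⟩ := hBOrep j a ha
    have himg : ((BO j').filter (fun c => c ≠ repB j ∧ (B c ∩ B (repB j)).card = y)).image (σ g)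
        = (BO j').filter (fun c => c ≠ a ∧ (B a ∩ B c).card = y) := by
      ext c
      simp only [Finset.mem_image, Finset.mem_filter]
      constructor
      · rintro ⟨d, ⟨hd, hda, hdy⟩, rfl⟩
        refine ⟨hclosed g j' d hd, ?_, ?_⟩
        · intro hEq
          exact hda ((σ g).injective (by rw [hEq, hg]))
        · rw [← hg, hcardinter g (repB j) d, Finset.inter_comm]
          exact hdy
      · rintro ⟨hc, hca, hcy⟩
        refine ⟨(σ g⁻¹) c, ⟨hclosed g⁻¹ j' c hc, ?_, ?_⟩, hsiginv g c⟩
        · intro hEq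
          apply hca
          rw [← hsiginv g c, hEq, hg]
        · rw [Finset.inter_comm, ← hcardinter g (repB j) ((σ g⁻¹) c), hsiginv, hg]
          exact hcy
    rw [← himg, Finset.card_image_of_injective _ (σ g).injective]
  -- evaluating the inner sum away from the diagonal
  have hrest : ∀ a : Fin b,
      ∑ c ∈ (BO j').erase a, ((B a ∩ B c).card : ℚ) =
        (((BO j').filter (fun c => c ≠ a ∧ (B a ∩ B c).card = y)).card : ℚ) * ((y:ℚ) - x)
          + (((BO j').erase a).card : ℚ) * x := by
    intro a
    have hterm : ∀ c ∈ (BO j').erase a, ((B a ∩ B c).card : ℚ) =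
        (if (B a ∩ B c).card = y then (1:ℚ) else 0) * ((y:ℚ) - x) + x := by
      intro c hc
      have hne : a ≠ c := fun h => (Finset.mem_erase.1 hc).1 h.symm
      rcases hqs a c hne with h | h
      · rw [h, if_neg (by omega)]
        push_cast
        ring
      · rw [h, if_pos rfl]
        push_cast
        ring
    rw [Finset.sum_congr rfl hterm, Finset.sum_add_distrib, Finset.sum_const,
      nsmul_eq_mul, ← Finset.sum_mul, Finset.sum_boole]
    congr 3
    rw [← Finset.filter_ne', Finset.filter_filter]
  -- the inner sum over a fixed block of orbit j
  have hinner : ∀ a ∈ BO j,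
      ∑ c ∈ BO j', ((B a ∩ B c).card : ℚ) =
        (((BO j').filter (fun c => c ≠ repB j ∧ (B c ∩ B (repB j)).card = y)).card : ℚ)
            * ((y:ℚ) - x)
          + ((BO j').card : ℚ) * x + (if j = j' then ((k:ℚ) - x) else 0) := by
    intro a ha
    have hrc : (((BO j').filter (fun c => c ≠ a ∧ (B a ∩ B c).card = y)).card : ℚ)
        = (((BO j').filter (fun c => c ≠ repB j ∧ (B c ∩ B (repB j)).card = y)).card : ℚ) := by
      exact_mod_cast hrconst a ha
    by_cases hjj : j = j'
    · subst hjj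
      rw [if_pos rfl, ← Finset.sum_erase_add (BO j) _ ha, hrest a, hrc,
        Finset.inter_self, hk a, Finset.card_erase_of_mem ha]
      have h1 : 1 ≤ (BO j).card := Finset.card_pos.2 ⟨a, ha⟩
      rw [Nat.cast_sub h1]
      push_cast
      ring
    · have haj' : a ∉ BO j' := fun h => hjj ((hdeltamem a ha).1 h)
      rw [if_neg hjj, ← Finset.erase_eq_of_notMem haj', hrest a, hrc,
        Finset.erase_eq_of_notMem haj']
      ring
  -- assembling
  have hΩne : ((BO j).card : ℚ) ≠ 0 := by
    have : 0 < (BO j).card := Finset.card_pos.2 ⟨repB j, hrepB j⟩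
    exact_mod_cast this.ne'
  have key : (∑ i, ((PO i).card : ℚ) *
        (((BO j).filter (fun a => rep i ∈ B a)).card : ℚ) *
        (((BO j').filter (fun a => rep i ∈ B a)).card : ℚ)) =
      ((BO j).card : ℚ) *
        ((((BO j').filter (fun a => a ≠ repB j ∧ (B a ∩ B (repB j)).card = y)).card : ℚ) *
            ((y : ℚ) - (x : ℚ)) +
          ((BO j').card : ℚ) * (x : ℚ) +
          (if j = j' then ((k : ℚ) - (x : ℚ)) else 0)) := by
    calc (∑ i, ((PO i).card : ℚ) *
          (((BO j).filter (fun a => rep i ∈ B a)).card : ℚ) *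
          (((BO j').filter (fun a => rep i ∈ B a)).card : ℚ))
        = ((∑ i : Fin m, (PO i).card * (((BO j).filter (fun a => rep i ∈ B a)).card *
            ((BO j').filter (fun a => rep i ∈ B a)).card) : ℕ) : ℚ) := by
          push_cast
          exact Finset.sum_congr rfl fun i _ => by ring
      _ = ((∑ a ∈ BO j, ∑ c ∈ BO j', (B a ∩ B c).card : ℕ) : ℚ) := by
          rw [hsum1]
      _ = ∑ a ∈ BO j, ∑ c ∈ BO j', ((B a ∩ B c).card : ℚ) := by
          push_cast
          rfl
      _ = ∑ a ∈ BO j,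
            ((((BO j').filter (fun c => c ≠ repB j ∧ (B c ∩ B (repB j)).card = y)).card : ℚ)
              * ((y:ℚ) - x)
            + ((BO j').card : ℚ) * x + (if j = j' then ((k:ℚ) - x) else 0)) :=
          Finset.sum_congr rfl hinner
      _ = ((BO j).card : ℚ) * _ := by
          rw [Finset.sum_const, nsmul_eq_mul]
  rw [key, one_div, inv_mul_cancel_left₀ hΩne]
end

section
/- Let D be a quasi-symmetric design with block intersection numbers x and y, and G an automorphism group acting on both points and blocks of D with all orbits of the same size ω. If a prime p divides k, x, and y, then the columns of the point orbit matrix of D with respect to G span a self-orthogonal code over F_p. -/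
open Finset

/-- Let `G` be an automorphism group of a quasi-symmetric `(v,k,λ)` design with block
intersection numbers `x` and `y`, acting on points and blocks with all orbits of the
same size `ω`. If a prime `p` divides `k`, `x` and `y`, then the columns of the point
orbit matrix span a self-orthogonal code of length `v/ω` over `F_p`. -/
theorem stmt13 (v b m n k lam x y ω p : ℕ) (hp : p.Prime) (hxy : x < y)
    (hpk : p ∣ k) (hpx : p ∣ x) (hpy : p ∣ y)
    (B : Fin b → Finset (Fin v))
    (hk : ∀ a, (B a).card = k)
    (hlam : ∀ q q' : Fin v, q ≠ q' →
      (Finset.univ.filter (fun a => q ∈ B a ∧ q' ∈ B a)).card = lam)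
    (hqs : ∀ a a', a ≠ a' → (B a ∩ B a').card = x ∨ (B a ∩ B a').card = y)
    (G : Subgroup (Equiv.Perm (Fin v)))
    (σ : G →* Equiv.Perm (Fin b))
    (hσ : ∀ (g : G) (a : Fin b), B (σ g a) = (B a).image (g : Equiv.Perm (Fin v)))
    (PO : Fin m → Finset (Fin v))
    (hPOorb : ∀ i, ∃ pt, ∀ q, q ∈ PO i ↔ ∃ g : G, (g : Equiv.Perm (Fin v)) pt = q)
    (hPOcov : ∀ pt, ∃ i, pt ∈ PO i)
    (hPOdisj : ∀ i i', i ≠ i' → Disjoint (PO i) (PO i'))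
    (hPOsize : ∀ i, (PO i).card = ω)
    (BO : Fin n → Finset (Fin b))
    (hBOorb : ∀ j, ∃ a, ∀ c, c ∈ BO j ↔ ∃ g : G, σ g a = c)
    (hBOcov : ∀ a, ∃ j, a ∈ BO j)
    (hBOdisj : ∀ j j', j ≠ j' → Disjoint (BO j) (BO j'))
    (hBOsize : ∀ j, (BO j).card = ω)
    (rep : Fin m → Fin v) (hrep : ∀ i, rep i ∈ PO i)
    (col : Fin n → (Fin m → ZMod p))
    (hcol : ∀ j i, col j i = (((BO j).filter (fun a => rep i ∈ B a)).card : ZMod p)) :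
    ∀ u ∈ Submodule.span (ZMod p) (Set.range col),
      ∀ w ∈ Submodule.span (ZMod p) (Set.range col), ∑ i, u i * w i = 0 := by
  classical
  -- block orbits are stable under the action
  have hBstab : ∀ (g : G) (j : Fin n) (a : Fin b), a ∈ BO j → σ g a ∈ BO j := by
    intro g j a ha
    obtain ⟨a₀, h⟩ := hBOorb j
    obtain ⟨h₁, rfl⟩ := (h a).1 ha
    exact (h _).2 ⟨g * h₁, by rw [map_mul]; rfl⟩
  -- membership of a point in a block is equivariant
  have hBmem : ∀ (g : G) (a : Fin b) (q : Fin v),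
      q ∈ B a ↔ (g : Equiv.Perm (Fin v)) q ∈ B (σ g a) := by
    intro g a q
    rw [hσ]
    constructor
    · exact fun hq => Finset.mem_image_of_mem _ hq
    · intro hq
      obtain ⟨q', hq', he⟩ := Finset.mem_image.1 hq
      rwa [(g : Equiv.Perm (Fin v)).injective he] at hq'
  -- σ g ∘ σ g⁻¹ = id
  have hinv : ∀ (g : G) (a : Fin b), σ g (σ g⁻¹ a) = a := by
    intro g a
    have : σ g (σ g⁻¹ a) = σ (g * g⁻¹) a := by rw [map_mul]; rfl
    rw [this, mul_inv_cancel, map_one]; rfl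
  -- the number of blocks of BO j through a point
  set c : Fin v → Fin n → ℕ := fun q j => ((BO j).filter (fun a => q ∈ B a)).card with hc
  -- c is invariant under the action
  have hA : ∀ (g : G) (q : Fin v) (j : Fin n), c ((g : Equiv.Perm (Fin v)) q) j = c q j := by
    intro g q j
    apply Finset.card_bij (fun a _ => σ g⁻¹ a)
    · intro a ha
      simp only [Finset.mem_filter] at ha ⊢
      refine ⟨hBstab g⁻¹ j a ha.1, ?_⟩
      have := (hBmem g (σ g⁻¹ a) q).2
      rw [hinv] at this
      exact this ha.2
    · intro a₁ h₁ a₂ h₂ he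
      have := congrArg (σ g) he
      rwa [hinv, hinv] at this
    · intro a ha
      simp only [Finset.mem_filter] at ha ⊢
      refine ⟨σ g a, ⟨hBstab g j a ha.1, (hBmem g a q).1 ha.2⟩, ?_⟩
      have := congrArg (σ g⁻¹) (hinv g⁻¹ (σ g a))
      have h2 : σ g⁻¹ (σ g a) = a := by
        have : σ g⁻¹ (σ g a) = σ (g⁻¹ * g) a := by rw [map_mul]; rfl
        rw [this, inv_mul_cancel, map_one]; rfl
      exact h2
  -- c is constant on point orbits
  have hAc : ∀ (i : Fin m) (q : Fin v), q ∈ PO i → ∀ j, c q j = c (rep i) j := by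
    intro i q hq j
    obtain ⟨pt, hpt⟩ := hPOorb i
    obtain ⟨g₁, hg₁⟩ := (hpt q).1 hq
    obtain ⟨g₂, hg₂⟩ := (hpt (rep i)).1 (hrep i)
    have hco : ((g₁ * g₂⁻¹ : G) : Equiv.Perm (Fin v)) (rep i) = q := by
      have : ((g₁ * g₂⁻¹ : G) : Equiv.Perm (Fin v)) =
          (g₁ : Equiv.Perm (Fin v)) * ((g₂ : Equiv.Perm (Fin v)))⁻¹ := rfl
      rw [this]
      simp only [Equiv.Perm.mul_apply]
      rw [← hg₂]
      simp only [Equiv.Perm.inv_def, Equiv.symm_apply_apply]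
      exact hg₁
    rw [← hco, hA]
  -- key orthogonality of columns, in ℕ
  have key : ∀ j j' : Fin n, p ∣ ∑ i, c (rep i) j * c (rep i) j' := by
    intro j j'
    -- pick a base block in BO j
    obtain ⟨a₀, ha₀iff⟩ := hBOorb j
    have ha₀ : a₀ ∈ BO j := (ha₀iff a₀).2 ⟨1, by rw [map_one]; rfl⟩
    have hω : 0 < ω := by
      rw [← hBOsize j]
      exact Finset.card_pos.2 ⟨a₀, ha₀⟩
    set S : ℕ := ∑ i, c (rep i) j * c (rep i) j' with hS
    set T : ℕ := ∑ a' ∈ BO j', (B a₀ ∩ B a').card with hT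
    -- step 1 : ω * S = ∑ over all points
    have step1 : ω * S = ∑ q : Fin v, c q j * c q j' := by
      have huniv : (Finset.univ : Finset (Fin v)) = Finset.univ.biUnion PO := by
        ext q
        constructor
        · intro _
          obtain ⟨i, hi⟩ := hPOcov q
          exact Finset.mem_biUnion.2 ⟨i, Finset.mem_univ i, hi⟩
        · intro _
          exact Finset.mem_univ q
      rw [hS, Finset.mul_sum]
      rw [show (∑ q : Fin v, c q j * c q j') =
          ∑ q ∈ Finset.univ.biUnion PO, c q j * c q j' from by rw [← huniv]]
      rw [Finset.sum_biUnion (fun i _ i' _ hii' => hPOdisj i i' hii')]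
      refine Finset.sum_congr rfl fun i _ => ?_
      refine Eq.symm ?_
      calc ∑ q ∈ PO i, c q j * c q j'
          = ∑ _q ∈ PO i, c (rep i) j * c (rep i) j' :=
            Finset.sum_congr rfl fun q hq => by rw [hAc i q hq j, hAc i q hq j']
        _ = ω * (c (rep i) j * c (rep i) j') := by
            rw [Finset.sum_const, hPOsize i, smul_eq_mul]
    -- step 2 : double counting
    have step2 : ∑ q : Fin v, c q j * c q j' =
        ∑ a ∈ BO j, ∑ a' ∈ BO j', (B a ∩ B a').card := by
      have hcard : ∀ (q : Fin v) (jj : Fin n),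
          c q jj = ∑ a ∈ BO jj, if q ∈ B a then 1 else 0 := by
        intro q jj; rw [hc]; exact Finset.card_filter _ _
      calc ∑ q : Fin v, c q j * c q j'
          = ∑ q : Fin v, ∑ a ∈ BO j, ∑ a' ∈ BO j',
              (if q ∈ B a then 1 else 0) * (if q ∈ B a' then 1 else 0) := by
            refine Finset.sum_congr rfl fun q _ => ?_
            rw [hcard q j, hcard q j', Finset.sum_mul_sum]
        _ = ∑ a ∈ BO j, ∑ a' ∈ BO j', ∑ q : Fin v,
              (if q ∈ B a then 1 else 0) * (if q ∈ B a' then 1 else 0) := by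
            rw [Finset.sum_comm]
            refine Finset.sum_congr rfl fun a _ => Finset.sum_comm
        _ = ∑ a ∈ BO j, ∑ a' ∈ BO j', (B a ∩ B a').card := by
            refine Finset.sum_congr rfl fun a _ => Finset.sum_congr rfl fun a' _ => ?_
            have : ∀ q : Fin v, (if q ∈ B a then 1 else 0) * (if q ∈ B a' then 1 else 0)
                = if q ∈ B a ∩ B a' then (1 : ℕ) else 0 := by
              intro q
              by_cases h1 : q ∈ B a <;> by_cases h2 : q ∈ B a' <;>
                simp [h1, h2, Finset.mem_inter]
            rw [Finset.sum_congr rfl fun q _ => this q]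
            rw [Finset.sum_ite_mem, Finset.univ_inter, Finset.sum_const, smul_eq_mul, mul_one]
    -- step 3 : the inner sum is constant on BO j
    have step3 : ∀ a ∈ BO j, ∑ a' ∈ BO j', (B a ∩ B a').card = T := by
      intro a ha
      obtain ⟨g, hg⟩ := (ha₀iff a).1 ha
      rw [hT, ← hg]
      have hinv2 : ∀ (g : G) (a : Fin b), σ g⁻¹ (σ g a) = a := by
        intro g a
        have := hinv g⁻¹ a
        rwa [inv_inv] at this
      refine Finset.sum_bij (fun a' _ => σ g⁻¹ a') (fun a' h => hBstab g⁻¹ j' a' h) ?_ ?_ ?_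
      · intro a₁ h₁ a₂ h₂ he
        have := congrArg (σ g) he
        rwa [hinv, hinv] at this
      · intro a' ha'
        exact ⟨σ g a', hBstab g j' a' ha', hinv2 g a'⟩
      · intro a' ha'
        have himg : B a' = (B (σ g⁻¹ a')).image (g : Equiv.Perm (Fin v)) := by
          rw [← hσ g (σ g⁻¹ a'), hinv]
        rw [hσ g a₀, himg, ← Finset.image_inter _ _ (g : Equiv.Perm (Fin v)).injective,
          Finset.card_image_of_injective _ (g : Equiv.Perm (Fin v)).injective]
    -- step 4 : combine, ω * S = ω * T
    have step4 : ω * S = ω * T := by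
      rw [step1, step2, Finset.sum_congr rfl step3, Finset.sum_const, hBOsize, smul_eq_mul]
    have hST : S = T := Nat.eq_of_mul_eq_mul_left hω step4
    -- step 5 : p divides T
    rw [hST, hT]
    refine Finset.dvd_sum fun a' _ => ?_
    by_cases he : a₀ = a'
    · subst he
      rw [Finset.inter_self, hk]
      exact hpk
    · rcases hqs a₀ a' he with h | h <;> rw [h]
      · exact hpx
      · exact hpy
  -- orthogonality of columns over ZMod p
  have keyZ : ∀ j j' : Fin n, ∑ i, col j i * col j' i = 0 := by
    intro j j'
    have : ((∑ i, c (rep i) j * c (rep i) j' : ℕ) : ZMod p) = 0 :=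
      (ZMod.natCast_eq_zero_iff _ _).mpr (key j j')
    rw [Nat.cast_sum] at this
    simp only [Nat.cast_mul] at this
    simpa only [hcol] using this
  -- extend to the span by bilinearity
  have key2 : ∀ u ∈ Submodule.span (ZMod p) (Set.range col),
      ∀ j : Fin n, ∑ i, u i * col j i = 0 := by
    intro u hu j
    induction hu using Submodule.span_induction with
    | mem w hw =>
      obtain ⟨j', rfl⟩ := hw
      exact keyZ j' j
    | zero => simp
    | add u₁ u₂ _ _ h1 h2 =>
      simp only [Pi.add_apply, add_mul, Finset.sum_add_distrib, h1, h2, add_zero]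
    | smul r u₁ _ h1 =>
      simp only [Pi.smul_apply, smul_eq_mul, mul_assoc, ← Finset.mul_sum, h1, mul_zero]
  intro u hu w hw
  induction hw using Submodule.span_induction with
  | mem w' hw' =>
    obtain ⟨j, rfl⟩ := hw'
    exact key2 u hu j
  | zero => simp
  | add w₁ w₂ _ _ h1 h2 =>
    simp only [Pi.add_apply, mul_add, Finset.sum_add_distrib, h1, h2, add_zero]
  | smul r w₁ _ h1 => 
    simp only [Pi.smul_apply, smul_eq_mul, mul_left_comm, ← Finset.mul_sum, h1, mul_zero]
end

section
/- Let D be a quasi-symmetric design with block intersection numbers x and y, and G an automorphism group acting with f fixed points, h fixed blocks, and all other point and block orbits of the same size ω. If a prime p divides ω, y−x, and k−x, then the columns of the non-fixed part of the point orbit matrix (the submatrix indexed by non-fixed point orbits and non-fixed block orbits) span a self-orthogonal code over F_p. -/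
open Finset

/-- Let `G` be an automorphism group of a quasi-symmetric design with block
intersection numbers `x < y`, acting with some fixed points, some fixed blocks, and
all other point and block orbits of the same size `ω` (every orbit has size 1 or `ω`).
If a prime `p` divides `ω`, `y − x` and `k − x`, then the columns of the non-fixed
part of the point orbit matrix span a self-orthogonal code over `F_p`. -/
theorem stmt14 (v b m n k lam x y ω p : ℕ) (hp : p.Prime) (hxy : x < y)
    (hpω : p ∣ ω) (hpyx : p ∣ y - x) (hpkx : p ∣ k - x)
    (B : Fin b → Finset (Fin v))
    (hk : ∀ a, (B a).card = k)
    (hlam : ∀ q q' : Fin v, q ≠ q' →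
      (Finset.univ.filter (fun a => q ∈ B a ∧ q' ∈ B a)).card = lam)
    (hqs : ∀ a a', a ≠ a' → (B a ∩ B a').card = x ∨ (B a ∩ B a').card = y)
    (G : Subgroup (Equiv.Perm (Fin v)))
    (σ : G →* Equiv.Perm (Fin b))
    (hσ : ∀ (g : G) (a : Fin b), B (σ g a) = (B a).image (g : Equiv.Perm (Fin v)))
    (PO : Fin m → Finset (Fin v))
    (hPOorb : ∀ i, ∃ pt, ∀ q, q ∈ PO i ↔ ∃ g : G, (g : Equiv.Perm (Fin v)) pt = q)
    (hPOcov : ∀ pt, ∃ i, pt ∈ PO i)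
    (hPOdisj : ∀ i i', i ≠ i' → Disjoint (PO i) (PO i'))
    (hPOsize : ∀ i, (PO i).card = 1 ∨ (PO i).card = ω)
    (BO : Fin n → Finset (Fin b))
    (hBOorb : ∀ j, ∃ a, ∀ c, c ∈ BO j ↔ ∃ g : G, σ g a = c)
    (hBOcov : ∀ a, ∃ j, a ∈ BO j)
    (hBOdisj : ∀ j j', j ≠ j' → Disjoint (BO j) (BO j'))
    (hBOsize : ∀ j, (BO j).card = 1 ∨ (BO j).card = ω)
    (rep : Fin m → Fin v) (hrep : ∀ i, rep i ∈ PO i)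
    (colNF : {j : Fin n // (BO j).card = ω} →
      ({i : Fin m // (PO i).card = ω} → ZMod p))
    (hcol : ∀ j i, colNF j i =
      (((BO j.1).filter (fun a => rep i.1 ∈ B a)).card : ZMod p)) :
    ∀ u ∈ Submodule.span (ZMod p) (Set.range colNF),
      ∀ w ∈ Submodule.span (ZMod p) (Set.range colNF), ∑ i, u i * w i = 0 := by
  classical
  haveI : NeZero p := ⟨hp.pos.ne'⟩
  -- The key orthogonality of generator columns.
  have key : ∀ js ss : {j : Fin n // (BO j).card = ω},
      ∑ i, colNF js i * colNF ss i = 0 := by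
    intro js ss
    obtain ⟨j, hj⟩ := js
    obtain ⟨s, hs⟩ := ss
    -- basic facts
    have hσmul : ∀ (g h : G) (a : Fin b), σ g (σ h a) = σ (g * h) a := by
      intro g h a; rw [map_mul]; rfl
    have hσone : ∀ a : Fin b, σ 1 a = a := by intro a; rw [map_one]; rfl
    have hBOne : ∀ j', (BO j').Nonempty := by
      intro j'
      obtain ⟨a0, ha0⟩ := hBOorb j'
      exact ⟨a0, (ha0 a0).mpr ⟨1, hσone a0⟩⟩
    have hωpos : 0 < ω := hj ▸ Finset.card_pos.mpr (hBOne j)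
    have hω2 : 2 ≤ ω := le_trans hp.two_le (Nat.le_of_dvd hωpos hpω)
    have hBOinv : ∀ j' (g : G) (a : Fin b), a ∈ BO j' ↔ σ g a ∈ BO j' := by
      intro j' g a
      obtain ⟨a0, ha0⟩ := hBOorb j'
      constructor
      · rintro h
        obtain ⟨h', rfl⟩ := (ha0 a).mp h
        exact (ha0 _).mpr ⟨g * h', (hσmul g h' a0).symm⟩
      · intro h
        obtain ⟨h', hh'⟩ := (ha0 _).mp h
        have h2 : σ g⁻¹ (σ g a) = a := by rw [hσmul, inv_mul_cancel, hσone]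
        rw [← h2, ← hh', hσmul]
        exact (ha0 _).mpr ⟨g⁻¹ * h', rfl⟩
    have hmem : ∀ (g : G) (q : Fin v) (a : Fin b),
        q ∈ B a ↔ (g : Equiv.Perm (Fin v)) q ∈ B (σ g a) := by
      intro g q a
      rw [hσ, Finset.mem_image]
      constructor
      · intro h; exact ⟨q, h, rfl⟩
      · rintro ⟨q', hq', heq⟩
        rwa [← (g : Equiv.Perm (Fin v)).injective heq]
    -- invariance of column counts under the group action on points
    have hNinv : ∀ j' (g : G) (q : Fin v),
        ((BO j').filter (fun a => (g : Equiv.Perm (Fin v)) q ∈ B a)).card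
          = ((BO j').filter (fun a => q ∈ B a)).card := by
      intro j' g q
      apply Finset.card_bij' (fun a _ => σ g⁻¹ a) (fun a _ => σ g a)
      · intro a ha
        simp only [Finset.mem_filter] at ha ⊢
        refine ⟨(hBOinv j' g⁻¹ a).mp ha.1, ?_⟩
        have := (hmem g⁻¹ _ a).mp ha.2
        simpa using this
      · intro a ha
        simp only [Finset.mem_filter] at ha ⊢
        exact ⟨(hBOinv j' g a).mp ha.1, (hmem g q a).mp ha.2⟩
      · intro a _; rw [hσmul, mul_inv_cancel, hσone]
      · intro a _; rw [hσmul, inv_mul_cancel, hσone]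
    have hNconst : ∀ j' i (q : Fin v), q ∈ PO i →
        ((BO j').filter (fun a => q ∈ B a)).card
          = ((BO j').filter (fun a => rep i ∈ B a)).card := by
      intro j' i q hq
      obtain ⟨pt, hpt⟩ := hPOorb i
      obtain ⟨g, hg⟩ := (hpt q).mp hq
      obtain ⟨g', hg'⟩ := (hpt (rep i)).mp (hrep i)
      have h3 : ((g * g'⁻¹ : G) : Equiv.Perm (Fin v)) (rep i) = q := by
        rw [← hg, ← hg']
        simp
      rw [← h3, hNinv]
    -- notation
    set γj : Fin m → ℕ := fun i => ((BO j).filter (fun a => rep i ∈ B a)).card with hγj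
    set γs : Fin m → ℕ := fun i => ((BO s).filter (fun a => rep i ∈ B a)).card with hγs
    set Nj : Fin v → ℕ := fun q => ((BO j).filter (fun a => q ∈ B a)).card with hNj
    set Ns : Fin v → ℕ := fun q => ((BO s).filter (fun a => q ∈ B a)).card with hNs
    set S : ℕ := ∑ a ∈ BO j, ∑ a' ∈ BO s, (B a ∩ B a').card with hSdef
    -- (A) double counting
    have hsplit : ∀ a a' : Fin b, (B a ∩ B a').card
        = ∑ q, (if q ∈ B a then 1 else 0) * (if q ∈ B a' then 1 else 0) := by
      intro a a'
      rw [show (B a ∩ B a').card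
          = ∑ q, if q ∈ B a ∩ B a' then 1 else 0 by
        rw [← Finset.card_filter, Finset.filter_mem_eq_inter, Finset.univ_inter]]
      apply Finset.sum_congr rfl
      intro q _
      by_cases h1 : q ∈ B a <;> by_cases h2 : q ∈ B a' <;>
        simp [Finset.mem_inter, h1, h2]
    have hS1 : S = ∑ q, Nj q * Ns q := by
      have hprod : ∀ q, Nj q * Ns q = ∑ a ∈ BO j, ∑ a' ∈ BO s,
          (if q ∈ B a then 1 else 0) * (if q ∈ B a' then 1 else 0) := by
        intro q
        rw [hNj, hNs]
        simp only
        rw [Finset.card_filter, Finset.card_filter, Finset.sum_mul_sum]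
      simp_rw [hprod]
      rw [hSdef]
      simp_rw [hsplit]
      rw [Finset.sum_congr rfl (fun a _ => Finset.sum_comm), Finset.sum_comm]
    -- (C) group points by orbits
    have hS2 : S = ∑ i, (PO i).card * (γj i * γs i) := by
      rw [hS1]
      have huniv : (Finset.univ : Finset (Fin v)) = Finset.univ.biUnion PO := by
        ext q
        obtain ⟨i, hi⟩ := hPOcov q
        exact iff_of_true (Finset.mem_univ q)
          (Finset.mem_biUnion.mpr ⟨i, Finset.mem_univ i, hi⟩)
      rw [huniv, Finset.sum_biUnion]
      · apply Finset.sum_congr rfl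
        intro i _
        have hcongr : ∀ q ∈ PO i, Nj q * Ns q = γj i * γs i := by
          intro q hq
          rw [hNj, hNs, hγj, hγs]
          simp only
          rw [hNconst j i q hq, hNconst s i q hq]
        rw [Finset.sum_congr rfl hcongr, Finset.sum_const, smul_eq_mul]
      · intro i _ i' _ hne
        exact hPOdisj i i' hne
    -- split fixed/nonfixed
    set T : ℕ := ∑ i ∈ Finset.univ.filter (fun i => (PO i).card = ω), γj i * γs i with hT
    set F : ℕ := ∑ i ∈ Finset.univ.filter (fun i => ¬ (PO i).card = ω), γj i * γs i with hF
    have hS3 : S = ω * T + F := by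
      rw [hS2, ← Finset.sum_filter_add_sum_filter_not Finset.univ
        (fun i => (PO i).card = ω), hT, hF, Finset.mul_sum]
      congr 1
      · apply Finset.sum_congr rfl
        intro i hi
        rw [(Finset.mem_filter.mp hi).2]
      · apply Finset.sum_congr rfl
        intro i hi
        have h1 : (PO i).card = 1 := by
          rcases hPOsize i with h | h
          · exact h
          · exact absurd h (Finset.mem_filter.mp hi).2
        rw [h1, one_mul]
    -- (D) fixed-point columns are 0 or ω
    have hfixed : ∀ i, (PO i).card = 1 → ∀ j', (BO j').card = ω →
        ((BO j').filter (fun a => rep i ∈ B a)).card = 0 ∨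
        ((BO j').filter (fun a => rep i ∈ B a)).card = ω := by
      intro i h1 j' hj'
      obtain ⟨pt, hpt⟩ := hPOorb i
      have hptm : pt ∈ PO i := (hpt pt).mpr ⟨1, by simp⟩
      have hfix : ∀ g : G, (g : Equiv.Perm (Fin v)) pt = pt := by
        intro g
        have hm : (g : Equiv.Perm (Fin v)) pt ∈ PO i := (hpt _).mpr ⟨g, rfl⟩
        exact Finset.card_le_one.mp (le_of_eq h1) _ hm _ hptm
      have hreppt : rep i = pt := Finset.card_le_one.mp (le_of_eq h1) _ (hrep i) _ hptm
      by_cases hemp : ((BO j').filter (fun a => rep i ∈ B a)) = ∅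
      · left; rw [hemp]; rfl
      · right
        obtain ⟨a1, ha1⟩ := Finset.nonempty_of_ne_empty hemp
        simp only [Finset.mem_filter] at ha1
        have hall : (BO j').filter (fun a => rep i ∈ B a) = BO j' := by
          apply Finset.filter_true_of_mem
          intro c hc
          obtain ⟨a0, ha0⟩ := hBOorb j'
          obtain ⟨g, hg⟩ := (ha0 c).mp hc
          obtain ⟨h', hh'⟩ := (ha0 a1).mp ha1.1
          have hc1 : c = σ (g * h'⁻¹) a1 := by
            rw [← hh', hσmul]
            rw [← hg]
            congr 1
            group
          rw [hc1, hreppt]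
          have h5 := (hmem (g * h'⁻¹) pt a1).mp (hreppt ▸ ha1.2)
          rwa [hfix] at h5
        rw [hall, hj']
    have hpωF : p * ω ∣ F := by
      rw [hF]
      apply Finset.dvd_sum
      intro i hi
      have h1 : (PO i).card = 1 := by
        rcases hPOsize i with h | h
        · exact h
        · exact absurd h (Finset.mem_filter.mp hi).2
      rcases hfixed i h1 j hj with h | h
      · rw [show γj i = 0 from h]; simp
      · rcases hfixed i h1 s hs with h' | h'
        · rw [show γs i = 0 from h']; simp
        · rw [show γj i = ω from h, show γs i = ω from h']
          exact mul_dvd_mul hpω dvd_rfl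
    -- (E) block-pair decomposition of S
    have hxk : x ≤ k := by
      obtain ⟨a1, ha1, a2, ha2, hne⟩ := Finset.one_lt_card.mp (hj ▸ hω2)
      have hle : (B a1 ∩ B a2).card ≤ k := by
        rw [← hk a1]
        exact Finset.card_le_card (Finset.inter_subset_left)
      rcases hqs a1 a2 hne with h | h
      · omega
      · omega
    set R : ℕ := ((BO j ×ˢ BO s).filter
      (fun aa => aa.1 ≠ aa.2 ∧ (B aa.1 ∩ B aa.2).card = y)).card with hR
    set D : ℕ := (BO j ∩ BO s).card with hD
    have hS4 : S = x * (ω * ω) + (y - x) * R + (k - x) * D := by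
      rw [hSdef, ← Finset.sum_product']
      have hterm : ∀ aa ∈ BO j ×ˢ BO s, (B aa.1 ∩ B aa.2).card
          = x + (y - x) * (if aa.1 ≠ aa.2 ∧ (B aa.1 ∩ B aa.2).card = y then 1 else 0)
              + (k - x) * (if aa.1 = aa.2 then 1 else 0) := by
        rintro ⟨a, a'⟩ _
        by_cases hd : a = a'
        · subst hd
          simp only [Finset.inter_self, hk a, ne_eq, not_true_eq_false, false_and,
            if_false, if_true, mul_zero, mul_one]
          omega
        · rcases hqs a a' hd with h | h
          · rw [h]
            have hne : ¬ (x = y) := Nat.ne_of_lt hxy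
            simp only [ne_eq, hd, not_false_eq_true, true_and, hne, if_false,
              mul_zero, mul_one, add_zero]
          · rw [h]
            simp only [ne_eq, hd, not_false_eq_true, true_and, if_true, if_false,
              mul_zero, mul_one, add_zero]
            omega
      rw [Finset.sum_congr rfl hterm]
      rw [Finset.sum_add_distrib, Finset.sum_add_distrib, Finset.sum_const,
        ← Finset.mul_sum, ← Finset.mul_sum]
      congr 1
      · congr 1
        · rw [Finset.card_product, hj, hs, smul_eq_mul, mul_comm]
        · congr 1
          rw [hR, Finset.card_filter]
      · congr 1
        rw [hD]
        rw [Finset.sum_product]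
        have hinner : ∀ a ∈ BO j, (∑ a' ∈ BO s, if a = a' then 1 else 0)
            = if a ∈ BO s then 1 else 0 := by
          intro a _
          rw [Finset.sum_ite_eq]
        rw [Finset.sum_congr rfl hinner, ← Finset.card_filter,
          Finset.filter_mem_eq_inter]
    -- (F) ω ∣ R
    have hωR : ω ∣ R := by
      obtain ⟨a0, ha0⟩ := hBOorb j
      have ha0m : a0 ∈ BO j := (ha0 a0).mpr ⟨1, hσone a0⟩
      set r : Fin b → ℕ := fun a =>
        ((BO s).filter (fun a' => a ≠ a' ∧ (B a ∩ B a').card = y)).card with hr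
      have hRsum : R = ∑ a ∈ BO j, r a := by
        rw [hR, Finset.card_filter, Finset.sum_product]
        apply Finset.sum_congr rfl
        intro a _
        rw [hr]
        simp only
        rw [Finset.card_filter]
      have hint : ∀ (g : G) (a a' : Fin b),
          (B (σ g a) ∩ B (σ g a')).card = (B a ∩ B a').card := by
        intro g a a'
        rw [hσ, hσ, ← Finset.image_inter _ _ (g : Equiv.Perm (Fin v)).injective,
          Finset.card_image_of_injective _ (g : Equiv.Perm (Fin v)).injective]
      have hrinv : ∀ (g : G) (a : Fin b), r (σ g a) = r a := by
        intro g a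
        rw [hr]
        simp only
        apply Finset.card_bij' (fun a' _ => σ g⁻¹ a') (fun a' _ => σ g a')
        · intro a' ha'
          simp only [Finset.mem_filter] at ha' ⊢
          obtain ⟨h1, h2, h3⟩ := ha'
          refine ⟨(hBOinv s g⁻¹ a').mp h1, ?_, ?_⟩
          · intro hh
            apply h2
            rw [hh, hσmul, mul_inv_cancel, hσone]
          · have h4 := hint g a (σ g⁻¹ a')
            rw [hσmul, mul_inv_cancel, hσone] at h4
            rw [← h4, h3]
        · intro a' ha'
          simp only [Finset.mem_filter] at ha' ⊢
          obtain ⟨h1, h2, h3⟩ := ha'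
          refine ⟨(hBOinv s g a').mp h1, ?_, ?_⟩
          · intro hh
            apply h2
            have := congrArg (fun c => σ g⁻¹ c) hh
            simpa [hσmul, inv_mul_cancel, hσone] using this
          · rw [hint g a a', h3]
        · intro a' _; rw [hσmul, mul_inv_cancel, hσone]
        · intro a' _; rw [hσmul, inv_mul_cancel, hσone]
      have hconst : ∀ a ∈ BO j, r a = r a0 := by
        intro a ha
        obtain ⟨g, hg⟩ := (ha0 a).mp ha
        rw [← hg, hrinv]
      rw [hRsum, Finset.sum_congr rfl hconst, Finset.sum_const, hj, smul_eq_mul]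
      exact Dvd.intro _ rfl
    -- (G) ω ∣ D
    have hωD : ω ∣ D := by
      by_cases hjs : j = s
      · subst hjs
        rw [hD, Finset.inter_self, hj]
      · rw [hD, Finset.disjoint_iff_inter_eq_empty.mp (hBOdisj j s hjs)]
        simp
    -- (H) conclude p ∣ T
    have hpωS : p * ω ∣ S := by
      rw [hS4]
      refine dvd_add (dvd_add ?_ ?_) ?_
      · exact Dvd.dvd.mul_left (mul_dvd_mul hpω dvd_rfl) x
      · exact mul_dvd_mul hpyx hωR
      · exact mul_dvd_mul hpkx hωD
    have hpT : p ∣ T := by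
      have h1 : p * ω ∣ ω * T := by
        have h2 : ω * T = S - F := by omega
        rw [h2]
        exact Nat.dvd_sub hpωS hpωF
      obtain ⟨t, ht⟩ := h1
      refine ⟨t, ?_⟩
      have h3 : ω * T = ω * (p * t) := by rw [ht]; ring
      exact Nat.eq_of_mul_eq_mul_left hωpos h3
    -- conclude in ZMod p
    have hcast : ((T : ℕ) : ZMod p)
        = ∑ i ∈ Finset.univ.filter (fun i => (PO i).card = ω),
            ((γj i : ZMod p) * (γs i : ZMod p)) := by
      rw [hT]
      push_cast
      rfl
    have hsum : ∑ i : {i : Fin m // (PO i).card = ω},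
        colNF ⟨j, hj⟩ i * colNF ⟨s, hs⟩ i = ((T : ℕ) : ZMod p) := by
      rw [hcast, Finset.sum_subtype (p := fun i => (PO i).card = ω)
        (Finset.univ.filter (fun i => (PO i).card = ω))
        (fun x => by simp only [Finset.mem_filter, Finset.mem_univ, true_and])
        (fun i => (γj i : ZMod p) * (γs i : ZMod p))]
      apply Finset.sum_congr rfl
      intro i _
      rw [hcol, hcol]
    rw [hsum]
    exact (ZMod.natCast_eq_zero_iff ..).mpr hpT
  -- bilinearity reduction
  intro u hu w hw
  let L : ({i : Fin m // (PO i).card = ω} → ZMod p) →ₗ[ZMod p]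
      ({i : Fin m // (PO i).card = ω} → ZMod p) →ₗ[ZMod p] ZMod p :=
    LinearMap.mk₂ (ZMod p) (fun u w => ∑ i, u i * w i)
      (fun u u' w => by simp [add_mul, Finset.sum_add_distrib])
      (fun c u w => by simp [Finset.mul_sum, mul_assoc])
      (fun u w w' => by simp [mul_add, Finset.sum_add_distrib])
      (fun c u w => by
        simp only [smul_eq_mul, Pi.smul_apply, Finset.mul_sum]
        apply Finset.sum_congr rfl
        intro i _
        ring)
  have h2 : ∀ ss, L u (colNF ss) = 0 := by
    intro ss
    have hle : Submodule.span (ZMod p) (Set.range colNF)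
        ≤ LinearMap.ker (L.flip (colNF ss)) := by
      rw [Submodule.span_le]
      rintro _ ⟨jj, rfl⟩
      simpa [L] using key jj ss
    simpa using hle hu
  have h3 : Submodule.span (ZMod p) (Set.range colNF) ≤ LinearMap.ker (L u) := by
    rw [Submodule.span_le]
    rintro _ ⟨ss, rfl⟩
    simpa using h2 ss
  simpa [L] using h3 hw
end

section
/- Let D be a quasi-symmetric 2-(q³, q²(q−1)/2, q(q³−q²−2)/4) design of Blokhuis-Haemers type (q a power of 2, q ≥ 4, block intersection numbers x = q²(q−2)/4, y = q²(q−1)/4), and let G be an automorphism group acting with f fixed points, h fixed blocks, and all other orbits of size 2. Then the binary code spanned by the columns of the non-fixed part of the point orbit matrix is doubly even and self-orthogonal. -/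
open Finset symmDiff

lemma aux_card_symmDiff {α : Type*} [DecidableEq α] (s t : Finset α) :
    (s ∆ t).card + 2 * (s ∩ t).card = s.card + t.card := by
  have h1 : s ∆ t = (s \ t) ∪ (t \ s) := symmDiff_def s t
  have hdisj : Disjoint (s \ t) (t \ s) := disjoint_sdiff_sdiff
  have h2 := Finset.card_sdiff_add_card_inter s t
  have h3 := Finset.card_sdiff_add_card_inter t s
  rw [Finset.inter_comm t s] at h3
  rw [h1, Finset.card_union_of_disjoint hdisj]
  omega

lemma aux_partition_card {α : Type*} [Fintype α] [DecidableEq α] {m : ℕ}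
    (f : Fin m → Finset α)
    (hcov : ∀ p, ∃ i, p ∈ f i) (hdis : ∀ i i', i ≠ i' → Disjoint (f i) (f i'))
    (S : Finset α) : ∑ i, (f i ∩ S).card = S.card := by
  have h1 : ∀ i, (f i ∩ S).card = ∑ p ∈ S, if p ∈ f i then 1 else 0 := by
    intro i
    rw [Finset.inter_comm, ← Finset.filter_mem_eq_inter, Finset.card_filter]
  calc ∑ i, (f i ∩ S).card = ∑ i, ∑ p ∈ S, if p ∈ f i then 1 else 0 :=
        Finset.sum_congr rfl fun i _ => h1 i
    _ = ∑ p ∈ S, ∑ i : Fin m, if p ∈ f i then 1 else 0 := Finset.sum_comm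
    _ = ∑ p ∈ S, 1 := by
        refine Finset.sum_congr rfl fun p _ => ?_
        rw [Finset.sum_boole]
        obtain ⟨i0, hi0⟩ := hcov p
        have : Finset.univ.filter (fun i => p ∈ f i) = {i0} := by
          ext i
          simp only [Finset.mem_filter, Finset.mem_univ, true_and, Finset.mem_singleton]
          constructor
          · intro hi
            by_contra hne
            exact Finset.disjoint_left.mp (hdis i i0 hne) hi hi0
          · rintro rfl; exact hi0
        simp [this]
    _ = S.card := by simp

lemma aux_card_subtype_filter {α : Type*} [Fintype α] (q p : α → Prop)
    [DecidablePred q] [DecidablePred p] :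
    (Finset.univ.filter fun x : {a // q a} => p x.1).card =
      (Finset.univ.filter fun a => q a ∧ p a).card := by
  rw [← Fintype.card_subtype, ← Fintype.card_subtype]
  exact Fintype.card_congr ((Equiv.subtypeSubtypeEquivSubtypeInter q p))

lemma aux_ip {ι : Type*} [Fintype ι] [DecidableEq ι] (u w : ι → ZMod 2) :
    ∑ i, u i * w i =
      (((Finset.univ.filter fun i => u i ≠ 0 ∧ w i ≠ 0).card : ℕ) : ZMod 2) := by
  have h01 : ∀ c : ZMod 2, c = 0 ∨ c = 1 := by decide
  rw [← Finset.sum_boole]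
  refine Finset.sum_congr rfl fun i _ => ?_
  rcases h01 (u i) with h | h <;> rcases h01 (w i) with h' | h' <;> simp [h, h']

lemma aux_code {ι : Type*} [Fintype ι] [DecidableEq ι] (vs : Set (ι → ZMod 2))
    (hw : ∀ v ∈ vs, 4 ∣ hammingNorm v)
    (ho : ∀ v ∈ vs, ∀ w ∈ vs, ∑ i, v i * w i = 0) :
    (∀ u ∈ Submodule.span (ZMod 2) vs, 4 ∣ hammingNorm u) ∧
    (∀ u ∈ Submodule.span (ZMod 2) vs, ∀ w ∈ Submodule.span (ZMod 2) vs,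
      ∑ i, u i * w i = 0) := by
  have h01 : ∀ c : ZMod 2, c = 0 ∨ c = 1 := by decide
  have key : ∀ w : ι → ZMod 2, (∀ v ∈ vs, ∑ i, v i * w i = 0) →
      ∀ u ∈ Submodule.span (ZMod 2) vs, ∑ i, u i * w i = 0 := by
    intro w hvw u hu
    induction hu using Submodule.span_induction with
    | mem x hx => exact hvw x hx
    | zero => simp
    | add x y hx hy px py => simpa [add_mul, Finset.sum_add_distrib] using by rw [px, py]; simp
    | smul c x hx px =>
        simp only [Pi.smul_apply, smul_eq_mul, mul_assoc, ← Finset.mul_sum, px, mul_zero]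
  have horth : ∀ u ∈ Submodule.span (ZMod 2) vs, ∀ w ∈ Submodule.span (ZMod 2) vs,
      ∑ i, u i * w i = 0 := by
    intro u hu w hw'
    induction hw' using Submodule.span_induction with
    | mem x hx => exact key x (fun v hv => ho v hv x hx) u hu
    | zero => simp
    | add x y hx hy px py => simpa [mul_add, Finset.sum_add_distrib] using by rw [px, py]; simp
    | smul c x hx px =>
        have : ∀ i, u i * (c • x) i = c * (u i * x i) := by
          intro i; simp [Pi.smul_apply, smul_eq_mul]; ring
        simp only [this, ← Finset.mul_sum, px, mul_zero]
  refine ⟨?_, horth⟩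
  have hnormadd : ∀ u w : ι → ZMod 2,
      hammingNorm (u + w) + 2 * (Finset.univ.filter fun i => u i ≠ 0 ∧ w i ≠ 0).card =
        hammingNorm u + hammingNorm w := by
    intro u w
    have hsupp : (Finset.univ.filter fun i => (u + w) i ≠ 0) =
        (Finset.univ.filter fun i => u i ≠ 0) ∆ (Finset.univ.filter fun i => w i ≠ 0) := by
      ext i
      simp only [Finset.mem_symmDiff, Finset.mem_filter, Finset.mem_univ, true_and,
        Pi.add_apply]
      rcases h01 (u i) with h | h <;> rcases h01 (w i) with h' | h' <;>
        simp [h, h'] <;> decide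
    have hsupp2 : (Finset.univ.filter fun i => u i ≠ 0 ∧ w i ≠ 0) =
        (Finset.univ.filter fun i => u i ≠ 0) ∩ (Finset.univ.filter fun i => w i ≠ 0) := by
      ext i; simp [Finset.mem_filter]
    simp only [hammingNorm, hsupp, hsupp2]
    exact aux_card_symmDiff _ _
  intro u hu
  induction hu using Submodule.span_induction with
  | mem x hx => exact hw x hx
  | zero => simp [hammingNorm]
  | add x y hx hy px py =>
      have hop : ∑ i, x i * y i = 0 := horth x hx y hy
      rw [aux_ip] at hop
      have h2 : (2:ℕ) ∣ (Finset.univ.filter fun i => x i ≠ 0 ∧ y i ≠ 0).card := by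
        rwa [ZMod.natCast_eq_zero_iff] at hop
      have h3 := hnormadd x y
      omega
  | smul c x hx px =>
      rcases h01 c with h | h
      · subst h; simp only [zero_smul]; simp [hammingNorm]
      · subst h; simpa [one_smul] using px

set_option maxHeartbeats 1600000 in
/-- Let `D` be a quasi-symmetric 2-(q³, q²(q−1)/2, q(q³−q²−2)/4) design of
Blokhuis–Haemers type (q a power of 2, q ≥ 4, block intersection numbers
x = q²(q−2)/4 and y = q²(q−1)/4), and let `G` be an automorphism group acting with
some fixed points, some fixed blocks and all other orbits of size 2. Then the binary
code spanned by the columns of the non-fixed part of the point orbit matrix is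
doubly even and self-orthogonal. -/
theorem stmt15 (mq q b m n : ℕ) (hm : 2 ≤ mq) (hq : q = 2 ^ mq)
    (B : Fin b → Finset (Fin (q ^ 3)))
    (hk : ∀ a, (B a).card = q ^ 2 * (q - 1) / 2)
    (hlam : ∀ p p' : Fin (q ^ 3), p ≠ p' →
      (Finset.univ.filter (fun a => p ∈ B a ∧ p' ∈ B a)).card =
        q * (q ^ 3 - q ^ 2 - 2) / 4)
    (hqs : ∀ a a', a ≠ a' →
      (B a ∩ B a').card = q ^ 2 * (q - 2) / 4 ∨
        (B a ∩ B a').card = q ^ 2 * (q - 1) / 4)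
    (G : Subgroup (Equiv.Perm (Fin (q ^ 3))))
    (σ : G →* Equiv.Perm (Fin b))
    (hσ : ∀ (g : G) (a : Fin b),
      B (σ g a) = (B a).image (g : Equiv.Perm (Fin (q ^ 3))))
    (PO : Fin m → Finset (Fin (q ^ 3)))
    (hPOorb : ∀ i, ∃ pt, ∀ p, p ∈ PO i ↔ ∃ g : G, (g : Equiv.Perm (Fin (q ^ 3))) pt = p)
    (hPOcov : ∀ pt, ∃ i, pt ∈ PO i)
    (hPOdisj : ∀ i i', i ≠ i' → Disjoint (PO i) (PO i'))
    (hPOsize : ∀ i, (PO i).card = 1 ∨ (PO i).card = 2)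
    (BO : Fin n → Finset (Fin b))
    (hBOorb : ∀ j, ∃ a, ∀ c, c ∈ BO j ↔ ∃ g : G, σ g a = c)
    (hBOcov : ∀ a, ∃ j, a ∈ BO j)
    (hBOdisj : ∀ j j', j ≠ j' → Disjoint (BO j) (BO j'))
    (hBOsize : ∀ j, (BO j).card = 1 ∨ (BO j).card = 2)
    (rep : Fin m → Fin (q ^ 3)) (hrep : ∀ i, rep i ∈ PO i)
    (colNF : {j : Fin n // (BO j).card = 2} →
      ({i : Fin m // (PO i).card = 2} → ZMod 2))
    (hcol : ∀ j i, colNF j i =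
      (((BO j.1).filter (fun a => rep i.1 ∈ B a)).card : ZMod 2)) :
    (∀ u ∈ Submodule.span (ZMod 2) (Set.range colNF), 4 ∣ hammingNorm u) ∧
    (∀ u ∈ Submodule.span (ZMod 2) (Set.range colNF),
      ∀ w ∈ Submodule.span (ZMod 2) (Set.range colNF), ∑ i, u i * w i = 0) := by
  classical
  -- arithmetic preliminaries
  obtain ⟨t, hqt⟩ : ∃ t, q = 4 * t := by
    refine ⟨2 ^ (mq - 2), ?_⟩
    have hmq : mq = 2 + (mq - 2) := by omega
    rw [hq, hmq, pow_add]; norm_num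
  have key4 : ∀ c : ℕ, q ^ 2 * c / 2 = 8 * (t ^ 2 * c) ∧ q ^ 2 * c / 4 = 4 * (t ^ 2 * c) := by
    intro c
    constructor
    · rw [hqt, show (4 * t) ^ 2 * c = 8 * (t ^ 2 * c) * 2 by ring,
        Nat.mul_div_cancel _ (by norm_num)]
    · rw [hqt, show (4 * t) ^ 2 * c = 4 * (t ^ 2 * c) * 4 by ring,
        Nat.mul_div_cancel _ (by norm_num)]
  have hk4 : 4 ∣ q ^ 2 * (q - 1) / 2 := by
    rw [(key4 (q - 1)).1]; exact ⟨2 * (t ^ 2 * (q - 1)), by ring⟩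
  have hz4any : ∀ c d : Fin b, c ≠ d → 4 ∣ (B c ∩ B d).card := by
    intro c d hne
    rcases hqs c d hne with h | h <;> rw [h]
    · rw [(key4 (q - 2)).2]; exact ⟨t ^ 2 * (q - 2), rfl⟩
    · rw [(key4 (q - 1)).2]; exact ⟨t ^ 2 * (q - 1), rfl⟩
  -- group action preliminaries
  have hPOg : ∀ (i) (g : G) (p), p ∈ PO i → (g : Equiv.Perm (Fin (q ^ 3))) p ∈ PO i := by
    intro i g p hp
    obtain ⟨pt, hpt⟩ := hPOorb i
    obtain ⟨g', hg'⟩ := (hpt p).mp hp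
    refine (hpt _).mpr ⟨g * g', ?_⟩
    rw [show ((g * g' : G) : Equiv.Perm (Fin (q ^ 3))) pt =
      (g : Equiv.Perm (Fin (q ^ 3))) ((g' : Equiv.Perm (Fin (q ^ 3))) pt) from rfl, hg']
  have hPOtr : ∀ (i) (p p'), p ∈ PO i → p' ∈ PO i →
      ∃ g : G, (g : Equiv.Perm (Fin (q ^ 3))) p = p' := by
    intro i p p' hp hp'
    obtain ⟨pt, hpt⟩ := hPOorb i
    obtain ⟨g1, hg1⟩ := (hpt p).mp hp
    obtain ⟨g2, hg2⟩ := (hpt p').mp hp'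
    refine ⟨g2 * g1⁻¹, ?_⟩
    rw [show ((g2 * g1⁻¹ : G) : Equiv.Perm (Fin (q ^ 3))) p =
      (g2 : Equiv.Perm (Fin (q ^ 3))) (((g1 : Equiv.Perm (Fin (q ^ 3))))⁻¹ p) from rfl,
      ← hg1, Equiv.Perm.inv_def, Equiv.symm_apply_apply, hg2]
  have hBOg : ∀ (j) (g : G) (c), c ∈ BO j → σ g c ∈ BO j := by
    intro j g c hc
    obtain ⟨a0, ha0⟩ := hBOorb j
    obtain ⟨g', hg'⟩ := (ha0 c).mp hc
    refine (ha0 _).mpr ⟨g * g', ?_⟩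
    rw [map_mul, Equiv.Perm.mul_apply, hg']
  have hBOtr : ∀ (j) (c c'), c ∈ BO j → c' ∈ BO j → ∃ g : G, σ g c = c' := by
    intro j c c' hc hc'
    obtain ⟨a0, ha0⟩ := hBOorb j
    obtain ⟨g1, hg1⟩ := (ha0 c).mp hc
    obtain ⟨g2, hg2⟩ := (ha0 c').mp hc'
    refine ⟨g2 * g1⁻¹, ?_⟩
    rw [← hg1, ← hg2, map_mul, Equiv.Perm.mul_apply, map_inv, Equiv.Perm.inv_def, Equiv.symm_apply_apply]
  have hfixpt : ∀ i, (PO i).card = 1 → ∀ g : G,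
      (g : Equiv.Perm (Fin (q ^ 3))) (rep i) = rep i := by
    intro i h1 g
    obtain ⟨x, hx⟩ := Finset.card_eq_one.mp h1
    have h2 := hrep i
    rw [hx, Finset.mem_singleton] at h2
    have h3 := hPOg i g (rep i) (hrep i)
    rw [hx, Finset.mem_singleton] at h3
    rw [h3, h2]
  -- cardinality of an invariant set avoiding fixed points
  have hinvCard : ∀ S : Finset (Fin (q ^ 3)),
      (∀ g : G, S.image (⇑(g : Equiv.Perm (Fin (q ^ 3)))) = S) →
      (∀ i, (PO i).card = 1 → rep i ∉ S) →
      S.card = 2 * (Finset.univ.filter fun i => (PO i).card = 2 ∧ rep i ∈ S).card := by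
    intro S hinv hfx
    have hpt : ∀ i, (PO i ∩ S).card = if (PO i).card = 2 ∧ rep i ∈ S then 2 else 0 := by
      intro i
      by_cases hr : rep i ∈ S
      · have hsub : PO i ⊆ S := by
          intro p hp
          obtain ⟨g, hg⟩ := hPOtr i (rep i) p (hrep i) hp
          rw [← hg, ← hinv g]
          exact Finset.mem_image_of_mem _ hr
        rw [Finset.inter_eq_left.mpr hsub]
        rcases hPOsize i with h | h
        · exact absurd hr (hfx i h)
        · simp [h, hr]
      · have hemp : PO i ∩ S = ∅ := by
          rw [Finset.eq_empty_iff_forall_notMem]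
          intro p hp
          rw [Finset.mem_inter] at hp
          obtain ⟨g, hg⟩ := hPOtr i p (rep i) hp.1 (hrep i)
          exact hr (by rw [← hg, ← hinv g]; exact Finset.mem_image_of_mem _ hp.2)
        simp [hemp, hr]
    have hpart := aux_partition_card PO hPOcov hPOdisj S
    rw [← hpart, Finset.sum_congr rfl (fun i _ => hpt i), Finset.sum_ite,
      Finset.sum_const, Finset.sum_const_zero, add_zero, smul_eq_mul, mul_comm]
  -- the two blocks of a non-fixed block orbit are permuted among themselves
  have himg : ∀ (j : Fin n) (a a' : Fin b), a ≠ a' → BO j = {a, a'} → ∀ g : G,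
      ((B a).image (⇑(g : Equiv.Perm (Fin (q ^ 3)))) = B a ∧
        (B a').image (⇑(g : Equiv.Perm (Fin (q ^ 3)))) = B a') ∨
      ((B a).image (⇑(g : Equiv.Perm (Fin (q ^ 3)))) = B a' ∧
        (B a').image (⇑(g : Equiv.Perm (Fin (q ^ 3)))) = B a) := by
    intro j a a' hne hBO g
    have ha : a ∈ BO j := by rw [hBO]; simp
    have ha' : a' ∈ BO j := by rw [hBO]; simp
    have h1 := hBOg j g a ha
    have h2 := hBOg j g a' ha'
    rw [hBO, Finset.mem_insert, Finset.mem_singleton] at h1 h2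
    have hinj : σ g a ≠ σ g a' := fun h => hne ((σ g).injective h)
    have e1 : (B a).image (⇑(g : Equiv.Perm (Fin (q ^ 3)))) = B (σ g a) := (hσ g a).symm
    have e2 : (B a').image (⇑(g : Equiv.Perm (Fin (q ^ 3)))) = B (σ g a') := (hσ g a').symm
    rcases h1 with h1 | h1 <;> rcases h2 with h2 | h2
    · exact absurd (h1.trans h2.symm) hinj
    · left; rw [e1, e2, h1, h2]; exact ⟨rfl, rfl⟩
    · right; rw [e1, e2, h1, h2]; exact ⟨rfl, rfl⟩
    · exact absurd (h1.trans h2.symm) hinj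
  have hinvI : ∀ (j : Fin n) (a a' : Fin b), a ≠ a' → BO j = {a, a'} → ∀ g : G,
      (B a ∩ B a').image (⇑(g : Equiv.Perm (Fin (q ^ 3)))) = B a ∩ B a' := by
    intro j a a' hne hBO g
    rw [Finset.image_inter _ _ (Equiv.injective _)]
    rcases himg j a a' hne hBO g with ⟨u, v⟩ | ⟨u, v⟩ <;> rw [u, v]
    exact Finset.inter_comm _ _
  have hinvD : ∀ (j : Fin n) (a a' : Fin b), a ≠ a' → BO j = {a, a'} → ∀ g : G,
      (B a ∆ B a').image (⇑(g : Equiv.Perm (Fin (q ^ 3)))) = B a ∆ B a' := by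
    intro j a a' hne hBO g
    rw [Finset.image_symmDiff _ _ (Equiv.injective _)]
    rcases himg j a a' hne hBO g with ⟨u, v⟩ | ⟨u, v⟩ <;> rw [u, v]
    exact symmDiff_comm _ _
  -- fixed points are not in the symmetric difference
  have hfixD : ∀ (j : Fin n) (a a' : Fin b), a ≠ a' → BO j = {a, a'} →
      ∀ i, (PO i).card = 1 → rep i ∉ B a ∆ B a' := by
    intro j a a' hne hBO i h1
    have hmem : ∀ c c', c ∈ BO j → c' ∈ BO j → rep i ∈ B c → rep i ∈ B c' := by
      intro c c' hc hc' hrc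
      obtain ⟨g, hg⟩ := hBOtr j c c' hc hc'
      rw [← hg, hσ g c]
      have hh : (g : Equiv.Perm (Fin (q ^ 3))) (rep i) ∈
          (B c).image (⇑(g : Equiv.Perm (Fin (q ^ 3)))) := Finset.mem_image_of_mem _ hrc
      rwa [hfixpt i h1 g] at hh
    have ha : a ∈ BO j := by rw [hBO]; simp
    have ha' : a' ∈ BO j := by rw [hBO]; simp
    intro hd
    rw [Finset.mem_symmDiff] at hd
    rcases hd with ⟨hx1, hx2⟩ | ⟨hx1, hx2⟩
    · exact hx2 (hmem a a' ha ha' hx1)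
    · exact hx2 (hmem a' a ha' ha hx1)
  -- entries of the column
  have hent : ∀ (j : {j : Fin n // (BO j).card = 2}) (a a' : Fin b), a ≠ a' →
      BO j.1 = {a, a'} → ∀ i : {i : Fin m // (PO i).card = 2},
      (colNF j i ≠ 0 ↔ rep i.1 ∈ B a ∆ B a') := by
    intro j a a' hne hBO i
    rw [hcol j i, hBO, Finset.filter_insert, Finset.filter_singleton]
    by_cases h1 : rep i.1 ∈ B a <;> by_cases h2 : rep i.1 ∈ B a' <;>
      simp [h1, h2, Finset.mem_symmDiff, Finset.card_insert_of_notMem, hne] <;> decide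
  -- weight of each column is divisible by 4
  have hwt : ∀ j : {j : Fin n // (BO j).card = 2}, 4 ∣ hammingNorm (colNF j) := by
    intro j
    obtain ⟨a, a', hne, hBO⟩ := Finset.card_eq_two.mp j.2
    have hDcard := aux_card_symmDiff (B a) (B a')
    rw [hk a, hk a'] at hDcard
    have hz := hz4any a a' hne
    have hD2 := hinvCard (B a ∆ B a') (hinvD j.1 a a' hne hBO) (hfixD j.1 a a' hne hBO)
    have hnorm : hammingNorm (colNF j) =
        (Finset.univ.filter fun i => (PO i).card = 2 ∧ rep i ∈ B a ∆ B a').card := by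
      show (Finset.univ.filter fun i => colNF j i ≠ 0).card = _
      rw [Finset.filter_congr (fun i _ => by
        rw [show (colNF j i ≠ 0) = (rep i.1 ∈ B a ∆ B a') from
          propext (hent j a a' hne hBO i)])]
      exact aux_card_subtype_filter (fun i => (PO i).card = 2)
        (fun i => rep i ∈ B a ∆ B a')
    rw [hnorm]
    omega
  -- orthogonality of columns
  have hortho : ∀ j j' : {j : Fin n // (BO j).card = 2},
      ∑ i, colNF j i * colNF j' i = 0 := by
    intro j j'
    rw [aux_ip]
    by_cases hjj : j = j'
    · subst hjj
      have hh : (Finset.univ.filter fun i => colNF j i ≠ 0 ∧ colNF j i ≠ 0).card =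
          hammingNorm (colNF j) := by
        show _ = (Finset.univ.filter fun i => colNF j i ≠ 0).card
        congr 1
        exact Finset.filter_congr (fun i _ => by simp)
      rw [hh, ZMod.natCast_eq_zero_iff]
      exact dvd_trans (by norm_num) (hwt j)
    · obtain ⟨a, a', hne, hBO⟩ := Finset.card_eq_two.mp j.2
      obtain ⟨e, e', hne', hBO'⟩ := Finset.card_eq_two.mp j'.2
      have hjne : j.1 ≠ j'.1 := fun h => hjj (Subtype.ext h)
      have hdisj := hBOdisj j.1 j'.1 hjne
      have ha : a ∈ BO j.1 := by rw [hBO]; simp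
      have ha' : a' ∈ BO j.1 := by rw [hBO]; simp
      have he : e ∈ BO j'.1 := by rw [hBO']; simp
      have he' : e' ∈ BO j'.1 := by rw [hBO']; simp
      have hae : a ≠ e := fun h => Finset.disjoint_left.mp hdisj ha (h ▸ he)
      have hae' : a ≠ e' := fun h => Finset.disjoint_left.mp hdisj ha (h ▸ he')
      have ha'e : a' ≠ e := fun h => Finset.disjoint_left.mp hdisj ha' (h ▸ he)
      have ha'e' : a' ≠ e' := fun h => Finset.disjoint_left.mp hdisj ha' (h ▸ he')
      set D := B a ∆ B a' with hD
      set D' := B e ∆ B e' with hD'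
      -- rewrite the filter
      have hflt : (Finset.univ.filter fun i => colNF j i ≠ 0 ∧ colNF j' i ≠ 0).card =
          (Finset.univ.filter fun i => (PO i).card = 2 ∧ rep i ∈ D ∩ D').card := by
        rw [Finset.filter_congr (fun i _ => by
          rw [show (colNF j i ≠ 0 ∧ colNF j' i ≠ 0) = (rep i.1 ∈ D ∩ D') from
            propext (by rw [Finset.mem_inter]
                        exact and_congr (hent j a a' hne hBO i) (hent j' e e' hne' hBO' i))])]
        exact aux_card_subtype_filter (fun i => (PO i).card = 2)
          (fun i => rep i ∈ D ∩ D')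
      rw [hflt]
      -- counting identities
      have hDD' : (D ∩ D').card =
          2 * (Finset.univ.filter fun i => (PO i).card = 2 ∧ rep i ∈ D ∩ D').card := by
        refine hinvCard _ (fun g => ?_) (fun i h1 hmem => ?_)
        · rw [Finset.image_inter _ _ (Equiv.injective _),
            hinvD j.1 a a' hne hBO g, hinvD j'.1 e e' hne' hBO' g]
        · exact hfixD j.1 a a' hne hBO i h1 (Finset.mem_inter.mp hmem).1
      have hE5 : ∃ w5, (D ∩ (B e ∩ B e')).card = 2 * w5 := by
        refine ⟨_, hinvCard _ (fun g => ?_) (fun i h1 hmem => ?_)⟩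
        · rw [Finset.image_inter _ _ (Equiv.injective _),
            hinvD j.1 a a' hne hBO g, hinvI j'.1 e e' hne' hBO' g]
        · exact hfixD j.1 a a' hne hBO i h1 (Finset.mem_inter.mp hmem).1
      obtain ⟨w5, hE5⟩ := hE5
      have hset1 : (D ∩ B e) ∆ (D ∩ B e') = D ∩ D' := by
        ext p; simp only [Finset.mem_symmDiff, Finset.mem_inter, hD']; tauto
      have hset2 : (D ∩ B e) ∩ (D ∩ B e') = D ∩ (B e ∩ B e') := by
        ext p; simp only [Finset.mem_inter]; tauto
      have hE1 := aux_card_symmDiff (D ∩ B e) (D ∩ B e')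
      rw [hset1, hset2] at hE1
      have hset3 : (B a ∩ B e) ∆ (B a' ∩ B e) = D ∩ B e := by
        ext p; simp only [Finset.mem_symmDiff, Finset.mem_inter, hD]; tauto
      have hset4 : (B a ∩ B e) ∩ (B a' ∩ B e) = (B a ∩ B a') ∩ B e := by
        ext p; simp only [Finset.mem_inter]; tauto
      have hE2 := aux_card_symmDiff (B a ∩ B e) (B a' ∩ B e)
      rw [hset3, hset4] at hE2
      have hset5 : (B a ∩ B e') ∆ (B a' ∩ B e') = D ∩ B e' := by
        ext p; simp only [Finset.mem_symmDiff, Finset.mem_inter, hD]; tauto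
      have hset6 : (B a ∩ B e') ∩ (B a' ∩ B e') = (B a ∩ B a') ∩ B e' := by
        ext p; simp only [Finset.mem_inter]; tauto
      have hE3 := aux_card_symmDiff (B a ∩ B e') (B a' ∩ B e')
      rw [hset5, hset6] at hE3
      have hE4 : ((B a ∩ B a') ∩ B e).card = ((B a ∩ B a') ∩ B e').card := by
        obtain ⟨g, hg⟩ := hBOtr j'.1 e e' he he'
        have himg2 : ((B a ∩ B a') ∩ B e).image (⇑(g : Equiv.Perm (Fin (q ^ 3)))) =
            (B a ∩ B a') ∩ B e' := by
          rw [Finset.image_inter _ _ (Equiv.injective _), hinvI j.1 a a' hne hBO g,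
            show (B e).image (⇑(g : Equiv.Perm (Fin (q ^ 3)))) = B e' by rw [← hσ g e, hg]]
        rw [← himg2, Finset.card_image_of_injective _ (Equiv.injective _)]
      have hx1 := hz4any a e hae
      have hx2 := hz4any a' e ha'e
      have hx3 := hz4any a e' hae'
      have hx4 := hz4any a' e' ha'e'
      rw [ZMod.natCast_eq_zero_iff]
      omega
  exact aux_code (Set.range colNF)
    (by rintro v ⟨j, rfl⟩; exact hwt j)
    (by rintro v ⟨j, rfl⟩ w ⟨j', rfl⟩; exact hortho j j')
end

section
/- Let D be a quasi-symmetric design of Blokhuis-Haemers type with parameters 2-(q³, q²(q−1)/2, q(q³−q²−2)/4) where q is a power of 2, q ≥ 2, and let G be an automorphism group acting with f fixed points, h fixed blocks, and all other orbits of size 2. Then the binary code spanned by the rows of the non-fixed part of the point orbit matrix is self-orthogonal; moreover if q ≥ 4 the code is doubly even. -/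
open Finset

private lemma stmt16_ham_add {ι : Type*} [Fintype ι] [DecidableEq ι] (u v : ι → ZMod 2) :
    hammingNorm (u + v) + 2 * ∑ j, (if u j = 1 ∧ v j = 1 then 1 else 0)
      = hammingNorm u + hammingNorm v := by
  classical
  have hz : ∀ x : ZMod 2, x = 0 ∨ x = 1 := by decide
  unfold hammingNorm
  rw [Finset.card_filter, Finset.card_filter, Finset.card_filter, Finset.mul_sum,
    ← Finset.sum_add_distrib, ← Finset.sum_add_distrib]
  refine Finset.sum_congr rfl fun j _ => ?_
  rcases hz (u j) with h1 | h1 <;> rcases hz (v j) with h2 | h2 <;>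
    simp [h1, h2, Pi.add_apply, show (1+1 : ZMod 2) = 0 by decide]

private lemma stmt16_ham_ip {ι : Type*} [Fintype ι] (u v : ι → ZMod 2) :
    ((∑ j, (if u j = 1 ∧ v j = 1 then 1 else 0) : ℕ) : ZMod 2) = ∑ j, u j * v j := by
  classical
  have hz : ∀ x : ZMod 2, x = 0 ∨ x = 1 := by decide
  push_cast
  refine Finset.sum_congr rfl fun j _ => ?_
  rcases hz (u j) with h1 | h1 <;> rcases hz (v j) with h2 | h2 <;> simp [h1, h2]

/-- Let `D` be a quasi-symmetric design of Blokhuis–Haemers type with parameters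
2-(q³, q²(q−1)/2, q(q³−q²−2)/4), `q` a power of 2 with `q ≥ 2`, and let `G` be an
automorphism group acting with some fixed points, some fixed blocks and all other
orbits of size 2. Then the binary code spanned by the rows of the non-fixed part of
the point orbit matrix is self-orthogonal; moreover, if `q ≥ 4` it is doubly even. -/
theorem stmt16 (mq q b m n : ℕ) (hm : 1 ≤ mq) (hq : q = 2 ^ mq)
    (B : Fin b → Finset (Fin (q ^ 3)))
    (hk : ∀ a, (B a).card = q ^ 2 * (q - 1) / 2)
    (hlam : ∀ p p' : Fin (q ^ 3), p ≠ p' →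
      (Finset.univ.filter (fun a => p ∈ B a ∧ p' ∈ B a)).card =
        q * (q ^ 3 - q ^ 2 - 2) / 4)
    (hr : ∀ p : Fin (q ^ 3),
      (Finset.univ.filter (fun a => p ∈ B a)).card = q * (q ^ 3 - 1) / 2)
    (hqs : ∀ a a', a ≠ a' →
      (B a ∩ B a').card = q ^ 2 * (q - 2) / 4 ∨
        (B a ∩ B a').card = q ^ 2 * (q - 1) / 4)
    (G : Subgroup (Equiv.Perm (Fin (q ^ 3))))
    (σ : G →* Equiv.Perm (Fin b))
    (hσ : ∀ (g : G) (a : Fin b),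
      B (σ g a) = (B a).image (g : Equiv.Perm (Fin (q ^ 3))))
    (PO : Fin m → Finset (Fin (q ^ 3)))
    (hPOorb : ∀ i, ∃ pt, ∀ p, p ∈ PO i ↔ ∃ g : G, (g : Equiv.Perm (Fin (q ^ 3))) pt = p)
    (hPOcov : ∀ pt, ∃ i, pt ∈ PO i)
    (hPOdisj : ∀ i i', i ≠ i' → Disjoint (PO i) (PO i'))
    (hPOsize : ∀ i, (PO i).card = 1 ∨ (PO i).card = 2)
    (BO : Fin n → Finset (Fin b))
    (hBOorb : ∀ j, ∃ a, ∀ c, c ∈ BO j ↔ ∃ g : G, σ g a = c)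
    (hBOcov : ∀ a, ∃ j, a ∈ BO j)
    (hBOdisj : ∀ j j', j ≠ j' → Disjoint (BO j) (BO j'))
    (hBOsize : ∀ j, (BO j).card = 1 ∨ (BO j).card = 2)
    (rep : Fin m → Fin (q ^ 3)) (hrep : ∀ i, rep i ∈ PO i)
    (rowNF : {i : Fin m // (PO i).card = 2} →
      ({j : Fin n // (BO j).card = 2} → ZMod 2))
    (hrow : ∀ i j, rowNF i j =
      (((BO j.1).filter (fun a => rep i.1 ∈ B a)).card : ZMod 2)) :
    (∀ u ∈ Submodule.span (ZMod 2) (Set.range rowNF),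
      ∀ w ∈ Submodule.span (ZMod 2) (Set.range rowNF), ∑ j, u j * w j = 0) ∧
    (4 ≤ q → ∀ u ∈ Submodule.span (ZMod 2) (Set.range rowNF), 4 ∣ hammingNorm u) := by
  classical
  -- ### Group action facts
  have hPOmem : ∀ (g : G) (i : Fin m) (x : Fin (q^3)), x ∈ PO i →
      (g : Equiv.Perm (Fin (q^3))) x ∈ PO i := by
    intro g i x hx
    obtain ⟨pt, hpt⟩ := hPOorb i
    obtain ⟨h, rfl⟩ := (hpt x).1 hx
    exact (hpt _).2 ⟨g * h, by simp⟩
  have hPOim : ∀ (g : G) (i : Fin m),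
      (PO i).image (g : Equiv.Perm (Fin (q^3))) = PO i := by
    intro g i
    apply Finset.Subset.antisymm
    · intro x hx
      obtain ⟨y, hy, rfl⟩ := Finset.mem_image.1 hx
      exact hPOmem g i y hy
    · intro x hx
      refine Finset.mem_image.2 ⟨((g⁻¹ : G) : Equiv.Perm (Fin (q^3))) x,
        hPOmem g⁻¹ i x hx, ?_⟩
      simp
  have hBOmem : ∀ (g : G) (j : Fin n) (a : Fin b), a ∈ BO j → σ g a ∈ BO j := by
    intro g j a ha
    obtain ⟨a0, h0⟩ := hBOorb j
    obtain ⟨h, rfl⟩ := (h0 a).1 ha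
    exact (h0 _).2 ⟨g * h, by simp [map_mul]⟩
  have hrep' : ∀ (i : Fin m) (x : Fin (q^3)), x ∈ PO i →
      ∃ g : G, (g : Equiv.Perm (Fin (q^3))) (rep i) = x := by
    intro i x hx
    obtain ⟨pt, hpt⟩ := hPOorb i
    obtain ⟨g1, hg1⟩ := (hpt x).1 hx
    obtain ⟨g0, hg0⟩ := (hpt (rep i)).1 (hrep i)
    refine ⟨g1 * g0⁻¹, ?_⟩
    simp [← hg0, ← hg1]
  have hBOrel : ∀ (j : Fin n) (a a' : Fin b), a ∈ BO j → a' ∈ BO j → ∃ g : G, σ g a = a' := by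
    intro j a a' ha ha'
    obtain ⟨a0, h0⟩ := hBOorb j
    obtain ⟨g1, rfl⟩ := (h0 a).1 ha
    obtain ⟨g2, rfl⟩ := (h0 a').1 ha'
    exact ⟨g2 * g1⁻¹, by simp [map_mul]⟩
  have hdeg : ∀ (i : Fin m) (j : Fin n) (x : Fin (q^3)), x ∈ PO i →
      ((BO j).filter fun a => x ∈ B a).card = ((BO j).filter fun a => rep i ∈ B a).card := by
    intro i j x hx
    obtain ⟨g, hg⟩ := hrep' i x hx
    have him : ((BO j).filter fun a => rep i ∈ B a).image (σ g)
        = (BO j).filter fun a => x ∈ B a := by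
      ext a'
      simp only [Finset.mem_image, Finset.mem_filter]
      constructor
      · rintro ⟨a, ⟨haBO, harep⟩, rfl⟩
        refine ⟨hBOmem g j a haBO, ?_⟩
        rw [hσ, ← hg]
        exact Finset.mem_image_of_mem _ harep
      · rintro ⟨ha'BO, hx'⟩
        refine ⟨σ g⁻¹ a', ⟨hBOmem g⁻¹ j a' ha'BO, ?_⟩, ?_⟩
        · rw [hσ]
          have hgi : rep i = (((g⁻¹ : G) : Equiv.Perm (Fin (q^3)))) x := by
            rw [← hg]; simp
          rw [hgi]
          exact Finset.mem_image_of_mem _ hx'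
        · rw [← Equiv.Perm.mul_apply, ← map_mul, mul_inv_cancel, map_one, Equiv.Perm.one_apply]
    rw [← him, Finset.card_image_of_injective _ (Equiv.injective _)]
  have hblk : ∀ (i : Fin m) (j : Fin n) (a a' : Fin b), a ∈ BO j → a' ∈ BO j →
      (PO i ∩ B a).card = (PO i ∩ B a').card := by
    intro i j a a' ha ha'
    obtain ⟨g, rfl⟩ := hBOrel j a a' ha ha'
    have : PO i ∩ B (σ g a) = (PO i ∩ B a).image (g : Equiv.Perm (Fin (q^3))) := by
      rw [Finset.image_inter _ _ (Equiv.injective _), hPOim, hσ]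
    rw [this, Finset.card_image_of_injective _ (Equiv.injective _)]
  -- ### Counting identities
  have hpart : ∀ f : Fin b → ℕ, ∑ a, f a = ∑ j, ∑ a ∈ BO j, f a := by
    intro f
    choose toOrb hto using hBOcov
    have hmem : ∀ (a : Fin b) (j : Fin n), a ∈ BO j ↔ toOrb a = j := by
      intro a j
      constructor
      · intro h
        by_contra hne
        exact Finset.disjoint_left.1 (hBOdisj j (toOrb a) (Ne.symm hne)) h (hto a)
      · rintro rfl; exact hto a
    rw [← Finset.sum_fiberwise Finset.univ toOrb f]
    refine Finset.sum_congr rfl fun j _ => Finset.sum_congr ?_ fun _ _ => rfl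
    ext a
    simp [← hmem]
  have hdc : ∀ (i : Fin m) (j : Fin n),
      ∑ a ∈ BO j, (PO i ∩ B a).card = ∑ x ∈ PO i, ((BO j).filter fun a => x ∈ B a).card := by
    intro i j
    have h1 : ∀ a : Fin b, (PO i ∩ B a).card = ∑ x ∈ PO i, if x ∈ B a then 1 else 0 := by
      intro a
      rw [← Finset.filter_mem_eq_inter, Finset.card_filter]
    simp only [h1, Finset.card_filter]
    exact Finset.sum_comm
  have hfix : ∀ (i : Fin m) (j : Fin n) (a : Fin b), (PO i).card = 2 → (BO j).card = 1 →
      a ∈ BO j → (PO i ∩ B a).card = 2 * ((BO j).filter fun a => rep i ∈ B a).card := by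
    intro i j a h2 h1 ha
    obtain ⟨a0, ha0⟩ := Finset.card_eq_one.1 h1
    have haa : a = a0 := by simpa [ha0] using ha
    subst haa
    have h0 : (PO i ∩ B a).card = ∑ a' ∈ BO j, (PO i ∩ B a').card := by
      rw [ha0, Finset.sum_singleton]
    rw [h0, hdc i j, Finset.sum_congr rfl (fun x hx => hdeg i j x hx), Finset.sum_const, h2,
      smul_eq_mul]
  have hnf : ∀ (i : Fin m) (j : Fin n) (a : Fin b), (PO i).card = 2 → (BO j).card = 2 →
      a ∈ BO j → (PO i ∩ B a).card = ((BO j).filter fun a => rep i ∈ B a).card := by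
    intro i j a h2 hb2 ha
    have hsum : ∑ a' ∈ BO j, (PO i ∩ B a').card
        = 2 * ((BO j).filter fun a => rep i ∈ B a).card := by
      rw [hdc i j, Finset.sum_congr rfl (fun x hx => hdeg i j x hx), Finset.sum_const, h2,
        smul_eq_mul]
    have hconst : ∑ a' ∈ BO j, (PO i ∩ B a').card = 2 * (PO i ∩ B a).card := by
      rw [Finset.sum_congr rfl (fun a' ha' => hblk i j a' a ha' ha), Finset.sum_const, hb2,
        smul_eq_mul]
    omega
  have hrsum : ∀ i : Fin m, ∑ j, ((BO j).filter fun a => rep i ∈ B a).card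
      = q * (q ^ 3 - 1) / 2 := by
    intro i
    have hp := hpart (fun a => if rep i ∈ B a then 1 else 0)
    rw [← hr (rep i), Finset.card_filter (fun a => rep i ∈ B a) Finset.univ, hp]
    exact Finset.sum_congr rfl fun j _ => Finset.card_filter _ _
  have hT : ∀ i s : Fin m,
      ∑ j, ∑ a ∈ BO j, (PO i ∩ B a).card * (PO s ∩ B a).card
      = ∑ x ∈ PO i, ∑ y ∈ PO s, (Finset.univ.filter fun a => x ∈ B a ∧ y ∈ B a).card := by
    intro i s
    rw [← hpart]
    have h1 : ∀ a : Fin b, (PO i ∩ B a).card * (PO s ∩ B a).card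
        = ∑ x ∈ PO i, ∑ y ∈ PO s, (if x ∈ B a ∧ y ∈ B a then 1 else 0) := by
      intro a
      rw [← Finset.filter_mem_eq_inter (s := PO i), ← Finset.filter_mem_eq_inter (s := PO s),
        Finset.card_filter, Finset.card_filter, Finset.sum_mul_sum]
      exact Finset.sum_congr rfl fun x _ => Finset.sum_congr rfl fun y _ => by
        by_cases hx : x ∈ B a <;> by_cases hy : y ∈ B a <;> simp [hx, hy]
    simp only [h1]
    rw [Finset.sum_comm]
    refine Finset.sum_congr rfl fun x _ => ?_
    rw [Finset.sum_comm]
    exact Finset.sum_congr rfl fun y _ => (Finset.card_filter _ _).symm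
  have hkey : ∀ i s : Fin m, (PO i).card = 2 → (PO s).card = 2 →
      4 * (∑ j ∈ Finset.univ.filter (fun j => ¬ (BO j).card = 2),
            ((BO j).filter fun a => rep i ∈ B a).card
              * ((BO j).filter fun a => rep s ∈ B a).card)
      + 2 * (∑ j ∈ Finset.univ.filter (fun j => (BO j).card = 2),
            ((BO j).filter fun a => rep i ∈ B a).card
              * ((BO j).filter fun a => rep s ∈ B a).card)
      = ∑ x ∈ PO i, ∑ y ∈ PO s, (Finset.univ.filter fun a => x ∈ B a ∧ y ∈ B a).card := by
    intro i s hi hs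
    rw [← hT i s,
      ← Finset.sum_filter_add_sum_filter_not Finset.univ (fun j => (BO j).card = 2)
        (fun j => ∑ a ∈ BO j, (PO i ∩ B a).card * (PO s ∩ B a).card)]
    have hp : ∑ j ∈ Finset.univ.filter (fun j => (BO j).card = 2),
        (∑ a ∈ BO j, (PO i ∩ B a).card * (PO s ∩ B a).card)
        = 2 * (∑ j ∈ Finset.univ.filter (fun j => (BO j).card = 2),
            ((BO j).filter fun a => rep i ∈ B a).card
              * ((BO j).filter fun a => rep s ∈ B a).card) := by
      rw [Finset.mul_sum]
      refine Finset.sum_congr rfl fun j hj => ?_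
      have hb2 : (BO j).card = 2 := (Finset.mem_filter.1 hj).2
      rw [Finset.sum_congr rfl
        (fun a ha => by rw [hnf i j a hi hb2 ha, hnf s j a hs hb2 ha]),
        Finset.sum_const, hb2, smul_eq_mul]
    have hnp : ∑ j ∈ Finset.univ.filter (fun j => ¬ (BO j).card = 2),
        (∑ a ∈ BO j, (PO i ∩ B a).card * (PO s ∩ B a).card)
        = 4 * (∑ j ∈ Finset.univ.filter (fun j => ¬ (BO j).card = 2),
            ((BO j).filter fun a => rep i ∈ B a).card
              * ((BO j).filter fun a => rep s ∈ B a).card) := by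
      rw [Finset.mul_sum]
      refine Finset.sum_congr rfl fun j hj => ?_
      have hb1 : (BO j).card = 1 := by
        rcases hBOsize j with h | h
        · exact h
        · exact absurd h (Finset.mem_filter.1 hj).2
      obtain ⟨a0, ha0⟩ := Finset.card_eq_one.1 hb1
      rw [ha0, Finset.sum_singleton, hfix i j a0 hi hb1 (by simp [ha0]),
        hfix s j a0 hs hb1 (by simp [ha0])]
      rw [ha0]
      ring
    rw [hp, hnp]
    ring
  have hval_ne : ∀ i s : Fin m, i ≠ s → (PO i).card = 2 → (PO s).card = 2 →
      ∑ x ∈ PO i, ∑ y ∈ PO s, (Finset.univ.filter fun a => x ∈ B a ∧ y ∈ B a).card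
      = 4 * (q * (q ^ 3 - q ^ 2 - 2) / 4) := by
    intro i s hne hi hs
    have hc : ∀ x ∈ PO i, ∑ y ∈ PO s, (Finset.univ.filter fun a => x ∈ B a ∧ y ∈ B a).card
        = 2 * (q * (q ^ 3 - q ^ 2 - 2) / 4) := by
      intro x hx
      rw [Finset.sum_congr rfl (fun y hy => hlam x y
        (fun he => Finset.disjoint_left.1 (hPOdisj i s hne) hx (he ▸ hy))),
        Finset.sum_const, hs, smul_eq_mul]
    rw [Finset.sum_congr rfl hc, Finset.sum_const, hi, smul_eq_mul, ← mul_assoc]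
    norm_num
  have hval_eq : ∀ i : Fin m, (PO i).card = 2 →
      ∑ x ∈ PO i, ∑ y ∈ PO i, (Finset.univ.filter fun a => x ∈ B a ∧ y ∈ B a).card
      = 2 * (q * (q ^ 3 - 1) / 2) + 2 * (q * (q ^ 3 - q ^ 2 - 2) / 4) := by
    intro i hi
    obtain ⟨u, v, huv, hPO⟩ := Finset.card_eq_two.1 hi
    have hu : (Finset.univ.filter fun a => u ∈ B a ∧ u ∈ B a).card = q * (q ^ 3 - 1) / 2 := by
      simp only [and_self]; exact hr u
    have hv : (Finset.univ.filter fun a => v ∈ B a ∧ v ∈ B a).card = q * (q ^ 3 - 1) / 2 := by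
      simp only [and_self]; exact hr v
    rw [hPO, Finset.sum_pair huv, Finset.sum_pair huv, Finset.sum_pair huv, hu, hv,
      hlam u v huv, hlam v u huv.symm]
    ring
  -- ### Arithmetic
  obtain ⟨t, htq, ht1, hteven⟩ : ∃ t, q = 2 * t ∧ 1 ≤ t ∧ (4 ≤ q → 2 ∣ t) := by
    refine ⟨2 ^ (mq - 1), ?_, Nat.one_le_two_pow, ?_⟩
    · rw [hq, ← pow_succ']
      congr 1
      omega
    · intro h4
      have hne : mq ≠ 1 := by rintro rfl; rw [hq] at h4; norm_num at h4
      exact dvd_pow_self 2 (by omega)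
  have ht3 : t ≤ t ^ 3 := Nat.le_self_pow (by norm_num) t
  have ht34 : t ^ 3 ≤ t ^ 4 := Nat.pow_le_pow_right ht1 (by norm_num)
  have hA : q * (q ^ 3 - 1) / 2 = 8 * t ^ 4 - t := by
    apply Nat.div_eq_of_eq_mul_left (by norm_num)
    have h1 : 1 ≤ q ^ 3 := Nat.one_le_pow _ _ (by omega)
    have h2 : t ≤ 8 * t ^ 4 := by nlinarith
    zify [h1, h2]
    rw [htq]
    push_cast
    ring
  have hC : q * (q ^ 3 - q ^ 2 - 2) / 4 = 4 * t ^ 4 - 2 * t ^ 3 - t := by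
    apply Nat.div_eq_of_eq_mul_left (by norm_num)
    have h1 : q ^ 2 ≤ q ^ 3 := Nat.pow_le_pow_right (by omega) (by norm_num)
    have h2 : 2 ≤ q ^ 3 - q ^ 2 := by
      have : q ^ 2 + 2 ≤ q ^ 3 := by
        rw [htq]
        have : 1 ≤ t ^ 2 := Nat.one_le_pow _ _ (by omega)
        nlinarith
      omega
    have h3 : 2 * t ^ 3 ≤ 4 * t ^ 4 := by nlinarith
    have h4 : t ≤ 4 * t ^ 4 - 2 * t ^ 3 := by
      have : t + 2 * t ^ 3 ≤ 4 * t ^ 4 := by nlinarith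
      omega
    zify [h1, h2, h3, h4]
    rw [htq]
    push_cast
    ring
  -- ### Parity of non-fixed inner products
  have heven : ∀ i s : Fin m, (PO i).card = 2 → (PO s).card = 2 →
      2 ∣ ∑ j ∈ Finset.univ.filter (fun j => (BO j).card = 2),
        ((BO j).filter fun a => rep i ∈ B a).card
          * ((BO j).filter fun a => rep s ∈ B a).card := by
    intro i s hi hs
    have hk := hkey i s hi hs
    by_cases his : i = s
    · subst his
      rw [hval_eq i hi, hA, hC] at hk
      generalize t ^ 4 = a4 at hk ht34
      generalize t ^ 3 = a3 at hk ht34 ht3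
      omega
    · rw [hval_ne i s his hi hs] at hk
      obtain ⟨L, hL⟩ : ∃ L, q * (q ^ 3 - q ^ 2 - 2) / 4 = L := ⟨_, rfl⟩
      rw [hL] at hk
      omega
  -- ### Weight of a generator row is divisible by 4 (q ≥ 4)
  have hN1 : ∀ i : Fin m, (PO i).card = 2 → 4 ≤ q →
      4 ∣ ∑ j ∈ Finset.univ.filter (fun j => (BO j).card = 2),
        (if ((BO j).filter fun a => rep i ∈ B a).card = 1 then 1 else 0) := by
    intro i hi h4
    have hγle : ∀ j : Fin n, ((BO j).filter fun a => rep i ∈ B a).card ≤ (BO j).card :=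
      fun j => Finset.card_filter_le _ _
    have hrs := hrsum i
    rw [← Finset.sum_filter_add_sum_filter_not Finset.univ (fun j => (BO j).card = 2)
      (fun j => ((BO j).filter fun a => rep i ∈ B a).card), hA] at hrs
    have hk := hkey i i hi hi
    rw [hval_eq i hi, hA, hC] at hk
    have hfixeq : ∑ j ∈ Finset.univ.filter (fun j => ¬ (BO j).card = 2),
        ((BO j).filter fun a => rep i ∈ B a).card
          * ((BO j).filter fun a => rep i ∈ B a).card
        = ∑ j ∈ Finset.univ.filter (fun j => ¬ (BO j).card = 2),
          ((BO j).filter fun a => rep i ∈ B a).card := by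
      refine Finset.sum_congr rfl fun j hj => ?_
      have hc1 : (BO j).card = 1 := by
        rcases hBOsize j with h | h
        · exact h
        · exact absurd h (Finset.mem_filter.1 hj).2
      have hle := hγle j
      rw [hc1] at hle
      rcases (by omega : ((BO j).filter fun a => rep i ∈ B a).card = 0
        ∨ ((BO j).filter fun a => rep i ∈ B a).card = 1) with h | h <;> rw [h]
    have hsq : ∑ j ∈ Finset.univ.filter (fun j => (BO j).card = 2),
        ((BO j).filter fun a => rep i ∈ B a).card
          * ((BO j).filter fun a => rep i ∈ B a).card
        = ∑ j ∈ Finset.univ.filter (fun j => (BO j).card = 2),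
            ((BO j).filter fun a => rep i ∈ B a).card
          + 2 * ∑ j ∈ Finset.univ.filter (fun j => (BO j).card = 2),
            (if ((BO j).filter fun a => rep i ∈ B a).card = 2 then 1 else 0) := by
      rw [Finset.mul_sum, ← Finset.sum_add_distrib]
      refine Finset.sum_congr rfl fun j hj => ?_
      have hb2 : (BO j).card = 2 := (Finset.mem_filter.1 hj).2
      have hle := hγle j
      rw [hb2] at hle
      rcases (by omega : ((BO j).filter fun a => rep i ∈ B a).card = 0
        ∨ ((BO j).filter fun a => rep i ∈ B a).card = 1
        ∨ ((BO j).filter fun a => rep i ∈ B a).card = 2) with h | h | h <;> rw [h] <;> simp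
    have hlin : ∑ j ∈ Finset.univ.filter (fun j => (BO j).card = 2),
        ((BO j).filter fun a => rep i ∈ B a).card
        = ∑ j ∈ Finset.univ.filter (fun j => (BO j).card = 2),
            (if ((BO j).filter fun a => rep i ∈ B a).card = 1 then 1 else 0)
          + 2 * ∑ j ∈ Finset.univ.filter (fun j => (BO j).card = 2),
            (if ((BO j).filter fun a => rep i ∈ B a).card = 2 then 1 else 0) := by
      rw [Finset.mul_sum, ← Finset.sum_add_distrib]
      refine Finset.sum_congr rfl fun j hj => ?_
      have hb2 : (BO j).card = 2 := (Finset.mem_filter.1 hj).2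
      have hle := hγle j
      rw [hb2] at hle
      rcases (by omega : ((BO j).filter fun a => rep i ∈ B a).card = 0
        ∨ ((BO j).filter fun a => rep i ∈ B a).card = 1
        ∨ ((BO j).filter fun a => rep i ∈ B a).card = 2) with h | h | h <;> rw [h] <;> simp
    rw [hfixeq, hsq] at hk
    have hbb2 : 2 ∣ t ^ 3 := dvd_trans (hteven h4) (dvd_pow_self t (by norm_num))
    generalize t ^ 4 = a4 at hk hrs ht34
    generalize t ^ 3 = a3 at hk hrs ht34 ht3 hbb2
    omega
  -- ### Generator inner products vanish
  have hip : ∀ i s : {i : Fin m // (PO i).card = 2},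
      ∑ j, rowNF i j * rowNF s j = 0 := by
    intro i s
    have h1 : ∀ j : {j : Fin n // (BO j).card = 2}, rowNF i j * rowNF s j
        = ((((BO j.1).filter fun a => rep i.1 ∈ B a).card
            * ((BO j.1).filter fun a => rep s.1 ∈ B a).card : ℕ) : ZMod 2) := by
      intro j
      rw [hrow i j, hrow s j]
      push_cast
      ring
    rw [Finset.sum_congr rfl (fun j _ => h1 j),
      ← Finset.sum_subtype (Finset.univ.filter (fun j => (BO j).card = 2)) (by simp)
        (fun j => ((((BO j).filter fun a => rep i.1 ∈ B a).card
            * ((BO j).filter fun a => rep s.1 ∈ B a).card : ℕ) : ZMod 2)),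
      ← Nat.cast_sum]
    exact (ZMod.natCast_eq_zero_iff _ 2).2 (heven i.1 s.1 i.2 s.2)
  -- ### Hamming weight of a generator row
  have hham : ∀ i : {i : Fin m // (PO i).card = 2}, hammingNorm (rowNF i)
      = ∑ j ∈ Finset.univ.filter (fun j => (BO j).card = 2),
        (if ((BO j).filter fun a => rep i.1 ∈ B a).card = 1 then 1 else 0) := by
    intro i
    rw [Finset.sum_subtype (p := fun j => (BO j).card = 2)
      (Finset.univ.filter (fun j => (BO j).card = 2)) (by simp)
      (fun j => if ((BO j).filter fun a => rep i.1 ∈ B a).card = 1 then 1 else 0)]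
    unfold hammingNorm
    rw [Finset.card_filter]
    refine Finset.sum_congr rfl fun j _ => ?_
    have hle : ((BO j.1).filter fun a => rep i.1 ∈ B a).card ≤ 2 := by
      have h := Finset.card_filter_le (BO j.1) (fun a => rep i.1 ∈ B a)
      have h2 := j.2
      omega
    rw [hrow i j]
    rcases (by omega : ((BO j.1).filter fun a => rep i.1 ∈ B a).card = 0
      ∨ ((BO j.1).filter fun a => rep i.1 ∈ B a).card = 1
      ∨ ((BO j.1).filter fun a => rep i.1 ∈ B a).card = 2) with h | h | h <;> rw [h]
    · norm_num
    · norm_num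
    · have h2 : ((2:ℕ) : ZMod 2) = 0 := by decide
      rw [h2]
      norm_num
  -- ### Self-orthogonality on the span
  have horth : ∀ u ∈ Submodule.span (ZMod 2) (Set.range rowNF),
      ∀ w ∈ Submodule.span (ZMod 2) (Set.range rowNF), ∑ j, u j * w j = 0 := by
    have hz : ∀ x : ZMod 2, x = 0 ∨ x = 1 := by decide
    have h1 : ∀ w ∈ Submodule.span (ZMod 2) (Set.range rowNF),
        ∀ i, ∑ j, rowNF i j * w j = 0 := by
      intro w hw
      refine Submodule.span_induction ?_ ?_ ?_ ?_ hw
      · rintro x ⟨s, rfl⟩ i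
        exact hip i s
      · intro i
        simp
      · intro x y _ _ ihx ihy i
        simp only [Pi.add_apply, mul_add, Finset.sum_add_distrib]
        rw [ihx i, ihy i, add_zero]
      · intro c x _ ih i
        rcases hz c with hc | hc <;> subst hc
        · simp
        · simpa using ih i
    intro u hu
    refine Submodule.span_induction ?_ ?_ ?_ ?_ hu
    · rintro x ⟨s, rfl⟩ w hw
      exact h1 w hw s
    · intro w _
      simp
    · intro x y _ _ ihx ihy w hw
      simp only [Pi.add_apply, add_mul, Finset.sum_add_distrib]
      rw [ihx w hw, ihy w hw, add_zero]
    · intro c x _ ih w hw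
      rcases hz c with hc | hc <;> subst hc
      · simp
      · simpa using ih w hw
  refine ⟨horth, ?_⟩
  -- ### Double evenness on the span
  intro h4 u hu
  have hz : ∀ x : ZMod 2, x = 0 ∨ x = 1 := by decide
  refine Submodule.span_induction ?_ ?_ ?_ ?_ hu
  · rintro x ⟨s, rfl⟩
    rw [hham s]
    exact hN1 s.1 s.2 h4
  · simp [hammingNorm]
  · intro x y hxm hym ihx ihy
    have hadd := stmt16_ham_add x y
    have hcast := stmt16_ham_ip x y
    rw [horth x hxm y hym] at hcast
    have h2 : 2 ∣ ∑ j, (if x j = 1 ∧ y j = 1 then 1 else 0) :=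
      (ZMod.natCast_eq_zero_iff _ 2).1 hcast
    omega
  · intro c x _ ih
    rcases hz c with hc | hc <;> subst hc
    · simp [hammingNorm]
    · simpa using ih
end

section
/- Let v_1, k_1, λ_1, v_2, k_2, λ_2 be design parameters with v_2 = v_1·k_2, and set r_i = λ_i(v_i−1)/(k_i−1) for i = 1,2. Given a 2-(v_1,k_1,λ_1) design D_1 and a resolvable 2-(v_2,k_2,λ_2) design D_2, the incidence structure whose points are the points of D_2 and whose blocks are, for each parallel class P of D_2 (with blocks of P labeled by points of D_1) and each block B of D_1, the union of the k_1 blocks of P labeled by points of B, is a 2-design with parameters v = v_1·k_2, k = k_1·k_2, λ = r_1·λ_2 + λ_1·(r_2 − λ_2). -/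
open Finset

/-- Shrikhande–Raghavarao construction: given a 2-(v₁,k₁,λ₁) design `D₁` and a
resolvable 2-(v₂,k₂,λ₂) design `D₂` with `v₂ = v₁·k₂` (parallel classes indexed by
`Fin c`, blocks of each class labeled bijectively by the points of `D₁`), the
structure whose blocks are, for each parallel class `t` and each block `a` of `D₁`,
the union of the blocks of class `t` labeled by the points of `B₁ a`, is a 2-design
with `v = v₁·k₂`, block size `k = k₁·k₂` and `λ = r₁·λ₂ + λ₁·(r₂ − λ₂)`. -/
theorem stmt18 (v1 b1 k1 lam1 r1 v2 b2 k2 lam2 r2 c : ℕ)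
    (hv : v2 = v1 * k2)
    (B1 : Fin b1 → Finset (Fin v1))
    (hk1 : ∀ a, (B1 a).card = k1)
    (hlam1 : ∀ u u' : Fin v1, u ≠ u' →
      (Finset.univ.filter (fun a => u ∈ B1 a ∧ u' ∈ B1 a)).card = lam1)
    (hr1 : ∀ u : Fin v1, (Finset.univ.filter (fun a => u ∈ B1 a)).card = r1)
    (B2 : Fin b2 → Finset (Fin v2))
    (hk2 : ∀ j, (B2 j).card = k2)
    (hlam2 : ∀ p p' : Fin v2, p ≠ p' →
      (Finset.univ.filter (fun j => p ∈ B2 j ∧ p' ∈ B2 j)).card = lam2)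
    (hr2 : ∀ p : Fin v2, (Finset.univ.filter (fun j => p ∈ B2 j)).card = r2)
    (cls : Fin b2 → Fin c)
    (hres : ∀ (t : Fin c) (p : Fin v2), ∃! j, cls j = t ∧ p ∈ B2 j)
    (lab : Fin b2 → Fin v1)
    (hlab : ∀ (t : Fin c) (u : Fin v1), ∃! j, cls j = t ∧ lab j = u)
    (NB : Fin c × Fin b1 → Finset (Fin v2))
    (hNB : ∀ w, NB w =
      Finset.univ.filter (fun p => ∃ j, cls j = w.1 ∧ p ∈ B2 j ∧ lab j ∈ B1 w.2)) :
    (∀ w, (NB w).card = k1 * k2) ∧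
    (∀ p p' : Fin v2, p ≠ p' →
      (Finset.univ.filter (fun w : Fin c × Fin b1 => p ∈ NB w ∧ p' ∈ NB w)).card =
        r1 * lam2 + lam1 * (r2 - lam2)) := by
  classical
  have hJex : ∀ (t : Fin c) (p : Fin v2), ∃ j, cls j = t ∧ p ∈ B2 j :=
    fun t p => (hres t p).exists
  choose J hJcls hJmem using hJex
  have hJuniq : ∀ (t : Fin c) (p : Fin v2) (j : Fin b2), cls j = t → p ∈ B2 j → j = J t p := by
    intro t p j h1 h2
    exact (hres t p).unique ⟨h1, h2⟩ ⟨hJcls t p, hJmem t p⟩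
  have hmemNB : ∀ (t : Fin c) (a : Fin b1) (p : Fin v2),
      p ∈ NB (t, a) ↔ lab (J t p) ∈ B1 a := by
    intro t a p
    rw [hNB]
    simp only [mem_filter, mem_univ, true_and]
    constructor
    · rintro ⟨j, h1, h2, h3⟩
      rwa [hJuniq t p j h1 h2] at h3
    · intro h
      exact ⟨J t p, hJcls t p, hJmem t p, h⟩
  constructor
  · rintro ⟨t, a⟩
    have hset : NB (t, a) = (univ.filter (fun j => cls j = t ∧ lab j ∈ B1 a)).biUnion B2 := by
      ext p
      rw [hNB]
      simp only [mem_filter, mem_univ, true_and, mem_biUnion]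
      constructor
      · rintro ⟨j, h1, h2, h3⟩; exact ⟨j, ⟨h1, h3⟩, h2⟩
      · rintro ⟨j, ⟨h1, h3⟩, h2⟩; exact ⟨j, h1, h2, h3⟩
    rw [hset, Finset.card_biUnion]
    · have hcard : (univ.filter (fun j => cls j = t ∧ lab j ∈ B1 a)).card = k1 := by
        rw [← hk1 a]
        apply Finset.card_bij (fun j _ => lab j)
        · intro j hj
          exact (mem_filter.mp hj).2.2
        · intro j hj j' hj' heq
          have h1 := (mem_filter.mp hj).2.1
          have h2 := (mem_filter.mp hj').2.1
          exact (hlab t (lab j')).unique ⟨h1, heq⟩ ⟨h2, rfl⟩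
        · intro u hu
          obtain ⟨j, ⟨hj1, hj2⟩, -⟩ := hlab t u
          exact ⟨j, mem_filter.mpr ⟨mem_univ j, hj1, hj2 ▸ hu⟩, hj2⟩
      rw [Finset.sum_congr rfl (fun j _ => hk2 j), Finset.sum_const, hcard, smul_eq_mul]
    · intro j hj j' hj' hne
      rw [Function.onFun, Finset.disjoint_left]
      intro p hp hp'
      apply hne
      rw [hJuniq t p j (mem_filter.mp hj).2.1 hp,
        hJuniq t p j' (mem_filter.mp hj').2.1 hp']
  · intro p p' hpp'
    have h1 : univ.filter (fun w : Fin c × Fin b1 => p ∈ NB w ∧ p' ∈ NB w)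
        = univ.filter (fun w => lab (J w.1 p) ∈ B1 w.2 ∧ lab (J w.1 p') ∈ B1 w.2) := by
      apply filter_congr
      rintro ⟨t, a⟩ -
      rw [hmemNB t a p, hmemNB t a p']
    have h2 : (univ.filter (fun w : Fin c × Fin b1 =>
        lab (J w.1 p) ∈ B1 w.2 ∧ lab (J w.1 p') ∈ B1 w.2)).card
        = ∑ t : Fin c,
          (univ.filter (fun a : Fin b1 => lab (J t p) ∈ B1 a ∧ lab (J t p') ∈ B1 a)).card := by
      rw [Finset.card_filter, Fintype.sum_prod_type]
      exact Finset.sum_congr rfl (fun t _ => (Finset.card_filter _ _).symm)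
    have hper : ∀ t : Fin c,
        (univ.filter (fun a : Fin b1 => lab (J t p) ∈ B1 a ∧ lab (J t p') ∈ B1 a)).card
        = if J t p = J t p' then r1 else lam1 := by
      intro t
      by_cases h : J t p = J t p'
      · rw [if_pos h, ← hr1 (lab (J t p))]
        congr 1
        ext a
        simp [h]
      · rw [if_neg h]
        apply hlam1
        intro heq
        exact h ((hlab t (lab (J t p'))).unique ⟨hJcls t p, heq⟩ ⟨hJcls t p', rfl⟩)
    have hT : (univ.filter (fun t : Fin c => J t p = J t p')).card = lam2 := by
      rw [← hlam2 p p' hpp']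
      apply Finset.card_bij (fun t _ => J t p)
      · intro t ht
        have h := (mem_filter.mp ht).2
        exact mem_filter.mpr ⟨mem_univ _, hJmem t p, h ▸ hJmem t p'⟩
      · intro t ht t' ht' heq
        have := hJcls t p
        rw [heq, hJcls t' p] at this
        exact this.symm
      · intro j hj
        obtain ⟨-, hjp, hjp'⟩ := mem_filter.mp hj
        have e1 : j = J (cls j) p := hJuniq (cls j) p j rfl hjp
        have e2 : j = J (cls j) p' := hJuniq (cls j) p' j rfl hjp'
        exact ⟨cls j, mem_filter.mpr ⟨mem_univ _, e1 ▸ e2 ▸ rfl⟩, e1.symm⟩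
    have hc : c = r2 := by
      rw [← hr2 p, ← Fintype.card_fin c, ← Finset.card_univ]
      apply Finset.card_bij (fun t (_ : t ∈ (univ : Finset (Fin c))) => J t p)
      · intro t _
        exact mem_filter.mpr ⟨mem_univ _, hJmem t p⟩
      · intro t _ t' _ heq
        have := hJcls t p
        rw [heq, hJcls t' p] at this
        exact this.symm
      · intro j hj
        have hjp := (mem_filter.mp hj).2
        exact ⟨cls j, mem_univ _, (hJuniq (cls j) p j rfl hjp).symm⟩
    rw [h1, h2, Finset.sum_congr rfl (fun t _ => hper t), Finset.sum_ite,
      Finset.sum_const, Finset.sum_const, smul_eq_mul, smul_eq_mul, hT]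
    have hneg : (univ.filter (fun t : Fin c => ¬ J t p = J t p')).card = c - lam2 := by
      have := Finset.card_filter_add_card_filter_not
        (s := (univ : Finset (Fin c))) (p := fun t => J t p = J t p')
      rw [hT, Finset.card_univ, Fintype.card_fin] at this
      omega
    rw [hneg, hc]
    ring
end
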